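/- arXiv:1309.7415 — 4 statements merged into one kernel-verified Lean document; each statement's English description precedes it below -/
import Mathlib

section
/- Let A : Sym(n) → ℝᵖ and B : Sym(n) → ℝ^q be linear maps, a ∈ ℝᵖ, b ∈ ℝ^q, and let C := {X ∈ S₊ⁿ : A(X) = a, B(X) ≤ b}. Suppose C contains a positive definite matrix. Let x̄ ∈ ℝⁿ be nonzero with x̄x̄ᵀ ∈ C, and let A_i := A*(e_i), B_j := B*(e_j). Then x̄x̄ᵀ is a vertex of C if and only if the set of vectors {A_i x̄ : 1 ≤ i ≤ p} ∪ {B_j x̄ : 1 ≤ j ≤ q, the j-th inequality is tight at x̄x̄ᵀ} spans ℝⁿ. -/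
open Matrix

/-- The normal cone, within the space of symmetric matrices (with the trace inner
product), of a set `C` of symmetric matrices at a point `X`. -/
def normalConeM {ι : Type*} [Fintype ι] (C : Set (Matrix ι ι ℝ)) (X : Matrix ι ι ℝ) :
    Set (Matrix ι ι ℝ) :=
  {c | c.IsSymm ∧ ∀ Y ∈ C, (c * Y).trace ≤ (c * X).trace}

/-- A point of a convex set of symmetric matrices is a vertex if its normal cone is
full-dimensional in the space `Sym(ι)` of symmetric matrices, whose dimension is
`card ι * (card ι + 1) / 2`. -/
def IsVertex {ι : Type*} [Fintype ι] (C : Set (Matrix ι ι ℝ)) (X : Matrix ι ι ℝ) : Prop :=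
  X ∈ C ∧ Module.finrank ℝ (Submodule.span ℝ (normalConeM C X))
      = Fintype.card ι * (Fintype.card ι + 1) / 2

section Aux
variable {n : ℕ}

lemma trace_mul_vecMulVec (M : Matrix (Fin n) (Fin n) ℝ) (u w : Fin n → ℝ) :
    (M * vecMulVec u w).trace = w ⬝ᵥ (M.mulVec u) := by
  simp only [Matrix.trace, Matrix.diag, Matrix.mul_apply, vecMulVec_apply, dotProduct,
    Matrix.mulVec, Finset.mul_sum]
  exact Finset.sum_congr rfl fun i _ => Finset.sum_congr rfl fun k _ => by ring

lemma vecMulVec_mulVec (u w z : Fin n → ℝ) :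
    (vecMulVec u w).mulVec z = (w ⬝ᵥ z) • u := by
  ext i
  simp only [Matrix.mulVec, vecMulVec_apply, dotProduct, Pi.smul_apply, smul_eq_mul,
    Finset.sum_mul, Finset.mul_sum]
  exact Finset.sum_congr rfl fun _ _ => by ring

lemma isSymm_of_real_posSemidef {M : Matrix (Fin n) (Fin n) ℝ} (h : M.PosSemidef) : M.IsSymm := by
  have := h.1
  rwa [Matrix.IsHermitian, conjTranspose_eq_transpose_of_trivial] at this

lemma trace_mul_nonneg_of_posSemidef {S Y : Matrix (Fin n) (Fin n) ℝ}
    (hS : S.PosSemidef) (hY : Y.PosSemidef) : 0 ≤ (S * Y).trace := by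
  obtain ⟨Cs, rfl⟩ := (by open scoped MatrixOrder in exact CStarAlgebra.nonneg_iff_eq_star_mul_self.mp hS.nonneg :
    ∃ B : Matrix (Fin n) (Fin n) ℝ, S = Bᴴ * B)
  obtain ⟨Cy, rfl⟩ := (by open scoped MatrixOrder in exact CStarAlgebra.nonneg_iff_eq_star_mul_self.mp hY.nonneg :
    ∃ B : Matrix (Fin n) (Fin n) ℝ, Y = Bᴴ * B)
  have h1 : (Csᴴ * Cs * (Cyᴴ * Cy)).trace = ((Cy * Csᴴ)ᵀ * (Cy * Csᴴ)).trace := by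
    rw [show (Cy * Csᴴ)ᵀ = Csᴴᵀ * Cyᵀ by rw [Matrix.transpose_mul]]
    simp only [conjTranspose_eq_transpose_of_trivial, Matrix.transpose_transpose,
      ← Matrix.mul_assoc]
    rw [Matrix.trace_mul_comm]
    simp only [Matrix.mul_assoc]
    rw [Matrix.trace_mul_comm]
    simp only [Matrix.mul_assoc]
    rw [Matrix.trace_mul_comm]
    simp only [Matrix.mul_assoc]
  rw [h1]
  simp only [Matrix.trace, Matrix.diag, Matrix.mul_apply, Matrix.transpose_apply]
  exact Finset.sum_nonneg fun i _ => Finset.sum_nonneg fun j _ => mul_self_nonneg _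

/-- The submodule of symmetric matrices. -/
def symmSub (n : ℕ) : Submodule ℝ (Matrix (Fin n) (Fin n) ℝ) where
  carrier := {M | M.IsSymm}
  add_mem' := fun h1 h2 => Matrix.IsSymm.add h1 h2
  zero_mem' := Matrix.isSymm_zero
  smul_mem' := fun c M h => by
    simp only [Set.mem_setOf_eq, Matrix.IsSymm, Matrix.transpose_smul] at *
    rw [h]

noncomputable def symmEquiv (n : ℕ) : (symmSub n) ≃ₗ[ℝ] (Sym2 (Fin n) → ℝ) where
  toFun M s := Sym2.lift ⟨fun i j => (M : Matrix (Fin n) (Fin n) ℝ) i j,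
    fun i j => M.2.apply j i⟩ s
  map_add' M N := by ext s; induction s using Sym2.ind with | _ i j => simp
  map_smul' c M := by ext s; induction s using Sym2.ind with | _ i j => simp
  invFun f := ⟨Matrix.of (fun i j => f s(i, j)), by
    ext i j
    simp only [Matrix.transpose_apply, Matrix.of_apply]
    rw [Sym2.eq_swap]⟩
  left_inv M := by ext i j; simp
  right_inv f := by ext s; induction s using Sym2.ind with | _ i j => simp

lemma mem_symmSub {n : ℕ} {M : Matrix (Fin n) (Fin n) ℝ} : M ∈ symmSub n ↔ M.IsSymm :=
  Iff.rfl

lemma finrank_symmSub (n : ℕ) : Module.finrank ℝ (symmSub n) = n * (n + 1) / 2 := by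
  rw [(symmEquiv n).finrank_eq]
  rw [Module.finrank_pi ℝ]
  rw [Sym2.card]
  simp [Nat.choose_two_right, Fintype.card_fin, Nat.mul_comm]

lemma quadBound (M : Matrix (Fin n) (Fin n) ℝ) (w : Fin n → ℝ) :
    -((∑ i, ∑ j, |M i j|) * (w ⬝ᵥ w)) ≤ w ⬝ᵥ M.mulVec w := by
  have hS : 0 ≤ w ⬝ᵥ w := Finset.sum_nonneg fun i _ => mul_self_nonneg _
  have key : ∀ i j : Fin n, -(|M i j| * (w ⬝ᵥ w)) ≤ w i * (M i j * w j) := by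
    intro i j
    have h1 : w i ^ 2 ≤ w ⬝ᵥ w := by
      have := Finset.single_le_sum (f := fun k => w k * w k)
        (fun k _ => mul_self_nonneg (w k)) (Finset.mem_univ i)
      simpa [dotProduct, sq] using this
    have h2 : w j ^ 2 ≤ w ⬝ᵥ w := by
      have := Finset.single_le_sum (f := fun k => w k * w k)
        (fun k _ => mul_self_nonneg (w k)) (Finset.mem_univ j)
      simpa [dotProduct, sq] using this
    have habs : |w i| * |w j| ≤ w ⬝ᵥ w := by
      nlinarith [sq_nonneg (|w i| - |w j|), sq_abs (w i), sq_abs (w j), abs_nonneg (w i),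
        abs_nonneg (w j)]
    have : |w i * (M i j * w j)| ≤ |M i j| * (w ⬝ᵥ w) := by
      rw [abs_mul, abs_mul]
      calc |w i| * (|M i j| * |w j|) = |M i j| * (|w i| * |w j|) := by ring
        _ ≤ |M i j| * (w ⬝ᵥ w) := by
            exact mul_le_mul_of_nonneg_left habs (abs_nonneg _)
    linarith [neg_abs_le (w i * (M i j * w j))]
  calc -((∑ i, ∑ j, |M i j|) * (w ⬝ᵥ w)) = ∑ i, ∑ j, -(|M i j| * (w ⬝ᵥ w)) := by
        rw [Finset.sum_mul, neg_eq_iff_eq_neg, ← Finset.sum_neg_distrib]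
        exact Finset.sum_congr rfl fun i _ => by
          rw [Finset.sum_mul, ← Finset.sum_neg_distrib]
          exact Finset.sum_congr rfl fun j _ => by ring
    _ ≤ ∑ i, ∑ j, w i * (M i j * w j) :=
        Finset.sum_le_sum fun i _ => Finset.sum_le_sum fun j _ => key i j
    _ = w ⬝ᵥ M.mulVec w := by
        simp only [dotProduct, Matrix.mulVec, Finset.mul_sum]

end Aux

section Aux2
variable {n : ℕ}

lemma dotProduct_self_pos {x : Fin n → ℝ} (hx : x ≠ 0) : 0 < x ⬝ᵥ x := by
  have hnn : 0 ≤ x ⬝ᵥ x := Finset.sum_nonneg fun i _ => mul_self_nonneg (x i)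
  rcases (eq_or_lt_of_le hnn).imp Eq.symm id with h | h
  · exact absurd ((dotProduct_self_eq_zero).mp h) hx
  · exact h

lemma isSymm_vecMulVec_self (u : Fin n → ℝ) : (vecMulVec u u).IsSymm := by
  ext i j
  simp [vecMulVec_apply, mul_comm]

lemma isSymm.posSemidef_of_quad {M : Matrix (Fin n) (Fin n) ℝ} (hM : M.IsSymm)
    (h : ∀ u : Fin n → ℝ, 0 ≤ u ⬝ᵥ M.mulVec u) : M.PosSemidef := by
  refine .of_dotProduct_mulVec_nonneg ?_ fun u => by simpa using h u
  rw [Matrix.IsHermitian, conjTranspose_eq_transpose_of_trivial, hM.eq]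

lemma vecMul_eq_zero_of_symm {M : Matrix (Fin n) (Fin n) ℝ} (hM : M.IsSymm)
    (hx : M.mulVec x = 0) : x ᵥ* M = 0 := by
  rw [← hM.eq, Matrix.vecMul_transpose, hx]

lemma symm_kernel_mem_span {x : Fin n → ℝ} (hx : x ≠ 0)
    (T : Submodule ℝ (Matrix (Fin n) (Fin n) ℝ))
    (hT : ∀ S : Matrix (Fin n) (Fin n) ℝ, S.PosSemidef → S.mulVec x = 0 → S ∈ T)
    (M : Matrix (Fin n) (Fin n) ℝ) (hM : M.IsSymm) (hMx : M.mulVec x = 0) : M ∈ T := by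
  set r : ℝ := x ⬝ᵥ x with hr_def
  have hr : 0 < r := dotProduct_self_pos hx
  set P : Matrix (Fin n) (Fin n) ℝ := (1 : Matrix (Fin n) (Fin n) ℝ) - r⁻¹ • vecMulVec x x
    with hP_def
  have hPx : P.mulVec x = 0 := by
    rw [hP_def, Matrix.sub_mulVec, Matrix.one_mulVec, Matrix.smul_mulVec,
      vecMulVec_mulVec, ← hr_def, smul_smul, inv_mul_cancel₀ hr.ne', one_smul, sub_self]
  have hPsymm : P.IsSymm := by
    rw [hP_def]
    exact (Matrix.isSymm_one).sub ((isSymm_vecMulVec_self x).smul r⁻¹)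
  -- quadratic form of P
  have hPquad : ∀ u : Fin n → ℝ, u ⬝ᵥ P.mulVec u =
      u ⬝ᵥ u - r⁻¹ * (x ⬝ᵥ u) ^ 2 := by
    intro u
    rw [hP_def, Matrix.sub_mulVec, Matrix.one_mulVec, Matrix.smul_mulVec,
      vecMulVec_mulVec, dotProduct_sub, dotProduct_smul, dotProduct_smul]
    simp only [smul_eq_mul, dotProduct_comm u x]
    ring
  have hPpsd : P.PosSemidef := by
    refine isSymm.posSemidef_of_quad hPsymm fun u => ?_
    rw [hPquad u]
    have hcs : (x ⬝ᵥ u) ^ 2 ≤ r * (u ⬝ᵥ u) := by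
      simpa [hr_def, dotProduct, sq] using
        Finset.sum_mul_sq_le_sq_mul_sq Finset.univ x u
    have := mul_le_mul_of_nonneg_left hcs (le_of_lt (inv_pos.mpr hr))
    rw [← mul_assoc, inv_mul_cancel₀ hr.ne', one_mul] at this
    linarith
  set lam : ℝ := ∑ i, ∑ j, |M i j| with hlam_def
  have hlam0 : 0 ≤ lam := Finset.sum_nonneg fun i _ => Finset.sum_nonneg fun j _ => abs_nonneg _
  set Q : Matrix (Fin n) (Fin n) ℝ := M + lam • P with hQ_def
  have hQx : Q.mulVec x = 0 := by
    rw [hQ_def, Matrix.add_mulVec, hMx, Matrix.smul_mulVec, hPx, smul_zero, add_zero]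
  have hQpsd : Q.PosSemidef := by
    refine isSymm.posSemidef_of_quad (hM.add (hPsymm.smul lam)) fun u => ?_
    -- decompose u
    set cc : ℝ := r⁻¹ * (x ⬝ᵥ u) with hcc_def
    set w : Fin n → ℝ := u - cc • x with hw_def
    have hu : u = w + cc • x := by rw [hw_def]; abel
    have hxw : x ⬝ᵥ w = 0 := by
      rw [hw_def, dotProduct_sub, dotProduct_smul, smul_eq_mul, hcc_def, ← hr_def]
      field_simp
      ring
    have hMw : M.mulVec u = M.mulVec w := by
      rw [hu, Matrix.mulVec_add, Matrix.mulVec_smul, hMx, smul_zero, add_zero]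
    have hxMw : x ⬝ᵥ M.mulVec w = 0 := by
      rw [Matrix.dotProduct_mulVec, vecMul_eq_zero_of_symm hM hMx, zero_dotProduct]
    have huMu : u ⬝ᵥ M.mulVec u = w ⬝ᵥ M.mulVec w := by
      rw [hMw, hu, add_dotProduct, smul_dotProduct, hxMw, smul_eq_mul, mul_zero, add_zero]
    have hPu : u ⬝ᵥ P.mulVec u = w ⬝ᵥ w := by
      rw [hPquad u]
      have : w ⬝ᵥ w = (u - cc • x) ⬝ᵥ (u - cc • x) := by rw [hw_def]
      rw [this]
      simp only [dotProduct_sub, sub_dotProduct, smul_dotProduct, dotProduct_smul, smul_eq_mul]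
      rw [hcc_def, ← hr_def, dotProduct_comm x u]
      field_simp
      ring
    have hq : u ⬝ᵥ Q.mulVec u = w ⬝ᵥ M.mulVec w + lam * (w ⬝ᵥ w) := by
      rw [hQ_def, Matrix.add_mulVec, dotProduct_add, huMu, Matrix.smul_mulVec,
        dotProduct_smul, smul_eq_mul, hPu]
    rw [hq]
    have := quadBound M w
    rw [← hlam_def] at this
    linarith
  have h1 : Q ∈ T := hT Q hQpsd hQx
  have h2 : lam • P ∈ T := Submodule.smul_mem T lam (hT P hPpsd hPx)
  have : M = Q - lam • P := by rw [hQ_def]; abel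
  rw [this]
  exact Submodule.sub_mem T h1 h2

lemma isSymm_vecMulVec_add (u w : Fin n → ℝ) :
    (vecMulVec u w + vecMulVec w u).IsSymm := by
  ext i j
  simp [vecMulVec_apply, Matrix.transpose_apply, mul_comm, add_comm]

/-- trace of a symmetric matrix against `x vᵀ + v xᵀ`. -/
lemma trace_mul_H (M : Matrix (Fin n) (Fin n) ℝ) (hM : M.IsSymm) (x v : Fin n → ℝ) :
    (M * (vecMulVec x v + vecMulVec v x)).trace = 2 * (v ⬝ᵥ M.mulVec x) := by
  rw [mul_add, Matrix.trace_add, trace_mul_vecMulVec, trace_mul_vecMulVec]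
  have h1 : x ⬝ᵥ M.mulVec v = v ⬝ᵥ M.mulVec x := by
    rw [Matrix.dotProduct_mulVec x M v]
    conv_lhs => rw [← hM.eq]
    rw [Matrix.vecMul_transpose, dotProduct_comm]
  rw [h1]; ring

/-- expansion of the trace against Z t. -/
lemma trace_expand (M : Matrix (Fin n) (Fin n) ℝ) (Xb H X₀ : Matrix (Fin n) (Fin n) ℝ)
    (e t : ℝ) :
    (M * ((1 - e) • (Xb + t • H) + e • X₀)).trace
      = (1 - e) * ((M * Xb).trace + t * (M * H).trace) + e * (M * X₀).trace := by
  simp only [mul_add, Matrix.mul_smul, Matrix.trace_add, Matrix.trace_smul, smul_eq_mul]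
  try ring

lemma cauchy_schwarz_posdef {X₀ : Matrix (Fin n) (Fin n) ℝ} (hX₀ : X₀.PosDef)
    (v : Fin n → ℝ) :
    ∃ K : ℝ, 0 ≤ K ∧ ∀ u : Fin n → ℝ, (v ⬝ᵥ u) ^ 2 ≤ K * (u ⬝ᵥ X₀.mulVec u) := by
  have hdet : IsUnit X₀.det := isUnit_iff_ne_zero.mpr hX₀.det_pos.ne'
  set y : Fin n → ℝ := X₀⁻¹.mulVec v with hy_def
  have hX₀y : X₀.mulVec y = v := by
    rw [hy_def, Matrix.mulVec_mulVec, Matrix.mul_nonsing_inv _ hdet, Matrix.one_mulVec]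
  have hsymm : X₀.IsSymm := isSymm_of_real_posSemidef hX₀.posSemidef
  refine ⟨y ⬝ᵥ X₀.mulVec y, by simpa using hX₀.posSemidef.dotProduct_mulVec_nonneg y, fun u => ?_⟩
  set K := y ⬝ᵥ X₀.mulVec y with hK_def
  have hquad : ∀ s : ℝ, 0 ≤ K * (s * s) + (2 * (v ⬝ᵥ u)) * s + u ⬝ᵥ X₀.mulVec u := by
    intro s
    have h0 := hX₀.posSemidef.dotProduct_mulVec_nonneg (u + s • y)
    simp only [star_trivial] at h0
    have hexp : (u + s • y) ⬝ᵥ X₀.mulVec (u + s • y)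
        = K * (s * s) + (2 * (v ⬝ᵥ u)) * s + u ⬝ᵥ X₀.mulVec u := by
      rw [Matrix.mulVec_add, Matrix.mulVec_smul]
      simp only [dotProduct_add, add_dotProduct, smul_dotProduct, dotProduct_smul, smul_eq_mul]
      have h1 : y ⬝ᵥ X₀.mulVec u = v ⬝ᵥ u := by
        rw [Matrix.dotProduct_mulVec y X₀ u]
        conv_lhs => rw [← hsymm.eq]
        rw [Matrix.vecMul_transpose, hX₀y]
      have h2 : u ⬝ᵥ X₀.mulVec y = v ⬝ᵥ u := by
        rw [hX₀y, dotProduct_comm]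
      rw [h1, h2, ← hK_def]
      ring
    rw [← hexp]
    exact h0
  have hd := discrim_le_zero hquad
  rw [discrim] at hd
  nlinarith [hd]



lemma normal_trace_H_zero {n p q : ℕ}
    (A : Fin p → Matrix (Fin n) (Fin n) ℝ) (B : Fin q → Matrix (Fin n) (Fin n) ℝ)
    (hA : ∀ i, (A i).IsSymm) (hB : ∀ j, (B j).IsSymm)
    (a : Fin p → ℝ) (b : Fin q → ℝ)
    (X₀ : Matrix (Fin n) (Fin n) ℝ)
    (hX₀C : X₀ ∈ {X : Matrix (Fin n) (Fin n) ℝ | X.PosSemidef ∧ (∀ i, (A i * X).trace = a i) ∧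
      (∀ j, (B j * X).trace ≤ b j)}) (hX₀ : X₀.PosDef)
    (x v : Fin n → ℝ)
    (hmem : vecMulVec x x ∈ {X : Matrix (Fin n) (Fin n) ℝ | X.PosSemidef ∧
      (∀ i, (A i * X).trace = a i) ∧ (∀ j, (B j * X).trace ≤ b j)})
    (hvA : ∀ i, v ⬝ᵥ (A i).mulVec x = 0)
    (hvB : ∀ j, (B j * vecMulVec x x).trace = b j → v ⬝ᵥ (B j).mulVec x = 0)
    (c : Matrix (Fin n) (Fin n) ℝ)
    (hc : c ∈ normalConeM {X : Matrix (Fin n) (Fin n) ℝ | X.PosSemidef ∧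
      (∀ i, (A i * X).trace = a i) ∧ (∀ j, (B j * X).trace ≤ b j)} (vecMulVec x x)) :
    (c * (vecMulVec x v + vecMulVec v x)).trace = 0 := by
  set C : Set (Matrix (Fin n) (Fin n) ℝ) := {X | X.PosSemidef ∧
      (∀ i, (A i * X).trace = a i) ∧ (∀ j, (B j * X).trace ≤ b j)} with hC_def
  set Xb : Matrix (Fin n) (Fin n) ℝ := vecMulVec x x with hXb_def
  set H : Matrix (Fin n) (Fin n) ℝ := vecMulVec x v + vecMulVec v x with hH_def
  have hHsymm : H.IsSymm := isSymm_vecMulVec_add x v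
  have hXbsymm : Xb.IsSymm := isSymm_vecMulVec_self x
  have hX₀symm : X₀.IsSymm := isSymm_of_real_posSemidef hX₀.posSemidef
  -- traces against H vanish for the A i and tight B j
  have hAH : ∀ i, (A i * H).trace = 0 := fun i => by
    rw [hH_def, trace_mul_H _ (hA i), hvA i, mul_zero]
  have hBH : ∀ j, (B j * Xb).trace = b j → (B j * H).trace = 0 := fun j hj => by
    rw [hH_def, trace_mul_H _ (hB j), hvB j hj, mul_zero]
  obtain ⟨K, hK0, hKcs⟩ := cauchy_schwarz_posdef hX₀ v
  set e : ℝ → ℝ := fun t => (K + 1) * t ^ 2 with he_def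
  set Z : ℝ → Matrix (Fin n) (Fin n) ℝ :=
    fun t => (1 - e t) • (Xb + t • H) + e t • X₀ with hZ_def
  have he_cont : Continuous e := by fun_prop
  have he0 : e 0 = 0 := by simp [he_def]
  have he_nonneg : ∀ t, 0 ≤ e t := fun t => by
    have : (0:ℝ) ≤ t ^ 2 := sq_nonneg t
    have : (0:ℝ) ≤ K + 1 := by linarith
    positivity
  -- eventually e t ≤ 1
  have hev1 : ∀ᶠ t in nhds (0:ℝ), e t ≤ 1 := by
    have : Filter.Tendsto e (nhds 0) (nhds (e 0)) := he_cont.continuousAt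
    rw [he0] at this
    exact this.eventually_le_const one_pos
  -- Z t is in C eventually
  have hZC : ∀ᶠ t in nhds (0:ℝ), Z t ∈ C := by
    have hpsd : ∀ t : ℝ, e t ≤ 1 → (Z t).PosSemidef := by
      intro t het
      refine isSymm.posSemidef_of_quad ?_ fun u => ?_
      · rw [hZ_def]
        exact ((hXbsymm.add (hHsymm.smul t)).smul (1 - e t)).add (hX₀symm.smul (e t))
      · have hXbu : u ⬝ᵥ Xb.mulVec u = (x ⬝ᵥ u) * (x ⬝ᵥ u) := by
          rw [hXb_def, vecMulVec_mulVec, dotProduct_smul, smul_eq_mul, dotProduct_comm u x]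
        have hHu : u ⬝ᵥ H.mulVec u = 2 * ((x ⬝ᵥ u) * (v ⬝ᵥ u)) := by
          rw [hH_def, Matrix.add_mulVec, vecMulVec_mulVec, vecMulVec_mulVec, dotProduct_add,
            dotProduct_smul, dotProduct_smul, smul_eq_mul, smul_eq_mul,
            dotProduct_comm u x, dotProduct_comm u v]
          ring
        have hX₀u : 0 ≤ u ⬝ᵥ X₀.mulVec u := by simpa using hX₀.posSemidef.dotProduct_mulVec_nonneg u
        have hcs := hKcs u
        have hH' : u ⬝ᵥ ((Xb + t • H).mulVec u) = (x ⬝ᵥ u) * (x ⬝ᵥ u)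
            + t * (2 * ((x ⬝ᵥ u) * (v ⬝ᵥ u))) := by
          rw [Matrix.add_mulVec, dotProduct_add, Matrix.smul_mulVec, dotProduct_smul,
            smul_eq_mul, hXbu, hHu]
        have hZu : u ⬝ᵥ (Z t).mulVec u = (1 - e t) * ((x ⬝ᵥ u) * (x ⬝ᵥ u)
            + t * (2 * ((x ⬝ᵥ u) * (v ⬝ᵥ u)))) + e t * (u ⬝ᵥ X₀.mulVec u) := by
          simp only [hZ_def]
          rw [Matrix.add_mulVec, dotProduct_add, Matrix.smul_mulVec,
            Matrix.smul_mulVec, dotProduct_smul, dotProduct_smul, smul_eq_mul,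
            smul_eq_mul, hH']
        rw [hZu]
        simp only [he_def] at het ⊢
        have h1 : 0 ≤ (1 - (K+1)*t^2) * ((x ⬝ᵥ u) + t * (v ⬝ᵥ u))^2 := by
          have : 0 ≤ 1 - (K+1)*t^2 := by linarith
          positivity
        have h2 : 0 ≤ t^2 * (K * (u ⬝ᵥ X₀.mulVec u) - (v ⬝ᵥ u)^2) :=
          mul_nonneg (sq_nonneg t) (by linarith)
        have h3 : 0 ≤ t^2 * (u ⬝ᵥ X₀.mulVec u) := mul_nonneg (sq_nonneg t) hX₀u
        have h4 : 0 ≤ ((K+1)*t^2) * (t^2 * (v ⬝ᵥ u)^2) :=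
          mul_nonneg (he_nonneg t) (mul_nonneg (sq_nonneg t) (sq_nonneg _))
        linarith [h1, h2, h3, h4]
    have heqs : ∀ t : ℝ, ∀ i, (A i * Z t).trace = a i := by
      intro t i
      rw [hZ_def, trace_expand, hAH i, hmem.2.1 i, hX₀C.2.1 i]
      ring
    -- inequalities
    have hineqs : ∀ᶠ t in nhds (0:ℝ), ∀ j, (B j * Z t).trace ≤ b j := by
      rw [Filter.eventually_all]
      intro j
      by_cases hbj : (B j * Xb).trace = b j
      · filter_upwards [hev1] with t het
        rw [hZ_def, trace_expand, hBH j hbj, hbj]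
        have hbx := hX₀C.2.2 j
        have h0 := he_nonneg t
        nlinarith [mul_nonneg h0 (sub_nonneg.mpr hbx)]
      · have hlt : (B j * Xb).trace < b j := lt_of_le_of_ne (hmem.2.2 j) hbj
        have hcont : Filter.Tendsto
            (fun t : ℝ => (1 - e t) * ((B j * Xb).trace + t * (B j * H).trace)
              + e t * (B j * X₀).trace) (nhds 0)
            (nhds ((B j * Xb).trace)) := by
          have : Continuous (fun t : ℝ => (1 - e t) * ((B j * Xb).trace + t * (B j * H).trace)
              + e t * (B j * X₀).trace) := by fun_prop
          have h := this.continuousAt (x := (0:ℝ))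
          convert h.tendsto using 2
          rw [he0]; ring
        filter_upwards [hcont.eventually_le_const hlt] with t ht
        rw [hZ_def, trace_expand]
        exact ht
    filter_upwards [hev1, hineqs] with t het hineq
    exact ⟨hpsd t het, heqs t, hineq⟩
  -- the normal cone inequality
  set T₀ : ℝ := (c * Xb).trace with hT₀_def
  set S₀ : ℝ := (c * X₀).trace with hS₀_def
  set h : ℝ := (c * H).trace with hh_def
  have hckey : ∀ᶠ t in nhds (0:ℝ), (1 - e t) * (T₀ + t * h) + e t * S₀ ≤ T₀ := by
    filter_upwards [hZC] with t hZt
    have := hc.2 (Z t) hZt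
    rw [hZ_def, trace_expand] at this
    exact this
  -- positive side
  have hpos : h ≤ 0 := by
    have key : ∀ᶠ t in nhdsWithin (0:ℝ) (Set.Ioi 0),
        h ≤ (K+1)*t*(t*h + T₀ - S₀) := by
      filter_upwards [hckey.filter_mono nhdsWithin_le_nhds,
        self_mem_nhdsWithin] with t hct (htpos : (0:ℝ) < t)
      simp only [he_def] at hct
      have hth : t * h ≤ t * ((K+1)*t*(t*h + T₀ - S₀)) := by nlinarith [hct]
      exact le_of_mul_le_mul_left hth htpos
    have htend : Filter.Tendsto (fun t : ℝ => (K+1)*t*(t*h + T₀ - S₀))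
        (nhdsWithin (0:ℝ) (Set.Ioi 0)) (nhds 0) := by
      have hcont : Continuous (fun t : ℝ => (K+1)*t*(t*h + T₀ - S₀)) := by fun_prop
      have := hcont.continuousAt (x := (0:ℝ))
      have h0 : (K+1)*(0:ℝ)*((0:ℝ)*h + T₀ - S₀) = 0 := by ring
      rw [ContinuousAt, h0] at this
      exact this.mono_left nhdsWithin_le_nhds
    exact ge_of_tendsto htend key
  -- negative side
  have hneg : 0 ≤ h := by
    have key : ∀ᶠ t in nhdsWithin (0:ℝ) (Set.Iio 0),
        (K+1)*t*(t*h + T₀ - S₀) ≤ h := by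
      filter_upwards [hckey.filter_mono nhdsWithin_le_nhds,
        self_mem_nhdsWithin] with t hct (htneg : t < (0:ℝ))
      simp only [he_def] at hct
      have hth : t * h ≤ t * ((K+1)*t*(t*h + T₀ - S₀)) := by nlinarith [hct]
      exact ((mul_le_mul_left_of_neg htneg).mp hth)
    have htend : Filter.Tendsto (fun t : ℝ => (K+1)*t*(t*h + T₀ - S₀))
        (nhdsWithin (0:ℝ) (Set.Iio 0)) (nhds 0) := by
      have hcont : Continuous (fun t : ℝ => (K+1)*t*(t*h + T₀ - S₀)) := by fun_prop
      have := hcont.continuousAt (x := (0:ℝ))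
      have h0 : (K+1)*(0:ℝ)*((0:ℝ)*h + T₀ - S₀) = 0 := by ring
      rw [ContinuousAt, h0] at this
      exact this.mono_left nhdsWithin_le_nhds
    exact le_of_tendsto htend key
  linarith


end Aux2

theorem rank_one_vertex_characterization {n p q : ℕ}
    (A : Fin p → Matrix (Fin n) (Fin n) ℝ) (B : Fin q → Matrix (Fin n) (Fin n) ℝ)
    (hA : ∀ i, (A i).IsSymm) (hB : ∀ j, (B j).IsSymm)
    (a : Fin p → ℝ) (b : Fin q → ℝ)
    (C : Set (Matrix (Fin n) (Fin n) ℝ))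
    (hC : C = {X | X.PosSemidef ∧ (∀ i, (A i * X).trace = a i) ∧
      (∀ j, (B j * X).trace ≤ b j)})
    (hSlater : ∃ X ∈ C, X.PosDef)
    (x : Fin n → ℝ) (hx : x ≠ 0) (hmem : Matrix.vecMulVec x x ∈ C) :
    IsVertex C (Matrix.vecMulVec x x) ↔
      Submodule.span ℝ ((Set.range fun i => (A i).mulVec x) ∪
        {v | ∃ j : Fin q, (B j * Matrix.vecMulVec x x).trace = b j ∧ v = (B j).mulVec x}) = ⊤ := by
  set Xb : Matrix (Fin n) (Fin n) ℝ := Matrix.vecMulVec x x with hXb_def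
  set N : Set (Matrix (Fin n) (Fin n) ℝ) := normalConeM C Xb with hN_def
  set T : Submodule ℝ (Matrix (Fin n) (Fin n) ℝ) := Submodule.span ℝ N with hT_def
  set V : Set (Fin n → ℝ) := (Set.range fun i => (A i).mulVec x) ∪
      {v | ∃ j : Fin q, (B j * Xb).trace = b j ∧ v = (B j).mulVec x} with hV_def
  have hTsym : T ≤ symmSub n := Submodule.span_le.mpr fun c hc => mem_symmSub.mpr hc.1
  -- membership facts
  have hmem' := hmem
  rw [hC] at hmem'
  obtain ⟨hXbpsd, hXbeq, hXbineq⟩ := hmem'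
  -- elements of the normal cone
  have hAN : ∀ i, A i ∈ N := by
    intro i
    refine ⟨hA i, fun Y hY => ?_⟩
    rw [hC] at hY
    rw [hY.2.1 i, hXbeq i]
  have hAN' : ∀ i, -(A i) ∈ N := by
    intro i
    refine ⟨(hA i).neg, fun Y hY => ?_⟩
    rw [hC] at hY
    simp only [neg_mul, Matrix.trace_neg, neg_le_neg_iff]
    rw [hY.2.1 i, hXbeq i]
  have hBN : ∀ j, (B j * Xb).trace = b j → B j ∈ N := by
    intro j hj
    refine ⟨hB j, fun Y hY => ?_⟩
    rw [hC] at hY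
    rw [hj]
    exact hY.2.2 j
  have hSN : ∀ S : Matrix (Fin n) (Fin n) ℝ, S.PosSemidef → S.mulVec x = 0 → S ∈ T := by
    intro S hS hSx
    have hmemN : -S ∈ N := by
      refine ⟨(isSymm_of_real_posSemidef hS).neg, fun Y hY => ?_⟩
      rw [hC] at hY
      simp only [neg_mul, Matrix.trace_neg]
      have h1 : 0 ≤ (S * Y).trace := trace_mul_nonneg_of_posSemidef hS hY.1
      have h2 : (S * Xb).trace = 0 := by
        rw [hXb_def, trace_mul_vecMulVec, hSx, dotProduct_zero]
      rw [h2]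
      linarith
    have : -S ∈ T := Submodule.subset_span hmemN
    simpa using Submodule.neg_mem T this
  have vert_iff : IsVertex C Xb ↔ T = symmSub n := by
    constructor
    · intro hvert
      have hfin : Module.finrank ℝ T = Module.finrank ℝ (symmSub n) := by
        rw [finrank_symmSub]
        have := hvert.2
        simpa [Fintype.card_fin] using this
      exact Submodule.eq_of_le_of_finrank_eq hTsym hfin
    · intro hTeq
      refine ⟨hmem, ?_⟩
      have : Module.finrank ℝ T = n * (n+1) / 2 := by rw [hTeq, finrank_symmSub]
      simpa [Fintype.card_fin] using this
  rw [vert_iff]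
  constructor
  · -- vertex ⇒ span
    intro hTeq
    by_contra hspan
    have hlt : Submodule.span ℝ V < ⊤ := lt_top_iff_ne_top.mpr hspan
    obtain ⟨f, hf0, hfbot⟩ := Submodule.exists_dual_map_eq_bot_of_lt_top hlt inferInstance
    set v : Fin n → ℝ := fun i => f (fun j => if i = j then 1 else 0) with hv_def
    have hfv : ∀ u : Fin n → ℝ, f u = v ⬝ᵥ u := by
      intro u
      rw [dotProduct_comm]
      show f u = ∑ i, u i * v i
      conv_lhs => rw [pi_eq_sum_univ u]
      rw [map_sum]
      refine Finset.sum_congr rfl fun i _ => ?_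
      rw [_root_.map_smul]
      rfl
    have hv0 : v ≠ 0 := by
      intro hv
      apply hf0
      refine LinearMap.ext fun u => ?_
      rw [hfv u, hv]
      simp
    have hVv : ∀ u ∈ V, v ⬝ᵥ u = 0 := by
      intro u hu
      have : f u ∈ Submodule.map f (Submodule.span ℝ V) :=
        Submodule.mem_map_of_mem (Submodule.subset_span hu)
      rw [hfbot] at this
      rw [← hfv u]
      simpa using this
    have hvA : ∀ i, v ⬝ᵥ (A i).mulVec x = 0 := fun i =>
      hVv _ (Or.inl ⟨i, rfl⟩)
    have hvB : ∀ j, (B j * Xb).trace = b j → v ⬝ᵥ (B j).mulVec x = 0 := fun j hj =>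
      hVv _ (Or.inr ⟨j, hj, rfl⟩)
    -- the functional
    set Hm : Matrix (Fin n) (Fin n) ℝ := vecMulVec x v + vecMulVec v x with hHm_def
    have hHmSymm : Hm.IsSymm := isSymm_vecMulVec_add x v
    set F : Matrix (Fin n) (Fin n) ℝ →ₗ[ℝ] ℝ :=
      { toFun := fun M => (M * Hm).trace
        map_add' := fun M1 M2 => by simp [add_mul, Matrix.trace_add]
        map_smul' := fun r M => by simp [smul_mul_assoc, Matrix.trace_smul] } with hF_def
    obtain ⟨X₀, hX₀C, hX₀⟩ := hSlater
    rw [hC] at hX₀C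
    have hmem2 : vecMulVec x x ∈ {X : Matrix (Fin n) (Fin n) ℝ | X.PosSemidef ∧
        (∀ i, (A i * X).trace = a i) ∧ (∀ j, (B j * X).trace ≤ b j)} := by
      rw [← hC]; exact hmem
    have hNF : N ⊆ {M | F M = 0} := by
      intro c hc
      have hc2 : c ∈ normalConeM {X : Matrix (Fin n) (Fin n) ℝ | X.PosSemidef ∧
          (∀ i, (A i * X).trace = a i) ∧ (∀ j, (B j * X).trace ≤ b j)} (vecMulVec x x) := by
        rw [← hC]; exact hc
      have := normal_trace_H_zero A B hA hB a b X₀ hX₀C hX₀ x v hmem2 hvA hvB c hc2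
      simpa [hF_def, hHm_def, hXb_def] using this
    have hTF : T ≤ LinearMap.ker F := by
      rw [hT_def]
      rw [Submodule.span_le]
      intro c hc
      exact LinearMap.mem_ker.mpr (hNF hc)
    -- Hm is symmetric, so Hm ∈ T by hTeq; but F Hm > 0
    have hHmT : Hm ∈ T := by rw [hTeq]; exact mem_symmSub.mpr hHmSymm
    have hFHm : F Hm = 0 := hTF hHmT
    -- compute F Hm as a sum of squares
    have hHmne : Hm ≠ 0 := by
      intro h0
      obtain ⟨i₀, hi₀⟩ := Function.ne_iff.mp hx
      have happ : ∀ i j, x i * v j + v i * x j = 0 := by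
        intro i j
        have := congrFun (congrFun h0 i) j
        simpa [hHm_def, vecMulVec_apply] using this
      have hvz : ∀ j, v j = 0 := by
        intro j
        have h1 := happ i₀ i₀
        have h2 : v i₀ = 0 := by
          have hxv : x i₀ * v i₀ = 0 := by linear_combination h1 / 2
          rcases mul_eq_zero.mp hxv with h | h
          · exact absurd h hi₀
          · exact h
        have h3 := happ i₀ j
        rw [h2] at h3
        simp at h3
        rcases h3 with h | h
        · exact absurd h hi₀
        · exact h
      exact hv0 (funext hvz)
    have hFHm_pos : 0 < F Hm := by
      have hcomp : F Hm = ∑ i, ∑ j, (Hm i j)^2 := by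
        simp only [hF_def, LinearMap.coe_mk, AddHom.coe_mk, Matrix.trace, Matrix.diag,
          Matrix.mul_apply]
        refine Finset.sum_congr rfl fun i _ => Finset.sum_congr rfl fun j _ => ?_
        rw [hHmSymm.apply i j, sq]
      rw [hcomp]
      obtain ⟨i, hi⟩ := Function.ne_iff.mp hHmne
      obtain ⟨j, hj⟩ := Function.ne_iff.mp hi
      have hij : Hm i j ≠ 0 := by simpa using hj
      have hpos : 0 < (Hm i j)^2 := by positivity
      have h1 : 0 < ∑ jj, (Hm i jj)^2 :=
        Finset.sum_pos' (fun k _ => sq_nonneg _) ⟨j, Finset.mem_univ j, hpos⟩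
      exact Finset.sum_pos' (fun k _ => Finset.sum_nonneg fun l _ => sq_nonneg _)
        ⟨i, Finset.mem_univ i, h1⟩
    rw [hFHm] at hFHm_pos
    exact lt_irrefl 0 hFHm_pos
  · -- span ⇒ vertex
    intro hspan
    refine le_antisymm hTsym ?_
    intro c hc
    have hcSymm : c.IsSymm := mem_symmSub.mp hc
    -- the set G of constraint matrices
    set G : Set (Matrix (Fin n) (Fin n) ℝ) := (Set.range A) ∪
        {m | ∃ j : Fin q, (B j * Xb).trace = b j ∧ m = B j} with hG_def
    have hGN : G ⊆ N := by
      rintro m (⟨i, rfl⟩ | ⟨j, hj, rfl⟩)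
      · exact hAN i
      · exact hBN j hj
    have hGsymm : Submodule.span ℝ G ≤ symmSub n := by
      rw [Submodule.span_le]
      rintro m (⟨i, rfl⟩ | ⟨j, hj, rfl⟩)
      · exact mem_symmSub.mpr (hA i)
      · exact mem_symmSub.mpr (hB j)
    set φ : Matrix (Fin n) (Fin n) ℝ →ₗ[ℝ] (Fin n → ℝ) :=
      { toFun := fun M => M.mulVec x
        map_add' := fun M1 M2 => Matrix.add_mulVec M1 M2 x
        map_smul' := fun r M => by simp [Matrix.smul_mulVec] } with hφ_def
    have himg : φ '' G = V := by
      rw [hG_def, hV_def, Set.image_union]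
      congr 1
      · ext u
        constructor
        · rintro ⟨m, ⟨i, rfl⟩, rfl⟩; exact ⟨i, rfl⟩
        · rintro ⟨i, rfl⟩; exact ⟨A i, ⟨i, rfl⟩, rfl⟩
      · ext u
        constructor
        · rintro ⟨m, ⟨j, hj, rfl⟩, rfl⟩; exact ⟨j, hj, rfl⟩
        · rintro ⟨j, hj, rfl⟩; exact ⟨B j, ⟨j, hj, rfl⟩, rfl⟩
    have hmap : Submodule.map φ (Submodule.span ℝ G) = ⊤ := by
      rw [Submodule.map_span, himg, hspan]
    -- find g in span G with φ g = φ c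
    have hφc : φ c ∈ Submodule.map φ (Submodule.span ℝ G) := by
      rw [hmap]; trivial
    obtain ⟨g, hgG, hgφ⟩ := hφc
    have hgsymm : g.IsSymm := mem_symmSub.mp (hGsymm hgG)
    have hdiff : (c - g) ∈ T := by
      apply symm_kernel_mem_span hx T hSN
      · exact hcSymm.sub hgsymm
      · have : φ (c - g) = 0 := by rw [map_sub, hgφ, sub_self]
        simpa [hφ_def, Matrix.sub_mulVec] using this
    have hgT : g ∈ T := by
      have : Submodule.span ℝ G ≤ T := by
        rw [hT_def]
        exact Submodule.span_mono hGN
      exact this hgG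
    have : c = (c - g) + g := by abel
    rw [this]
    exact Submodule.add_mem T hdiff hgT
end

section
/- Let K ⊆ E be a pointed closed convex cone with nonempty interior in a finite-dimensional real inner product space E, let A : E → ℝᵖ and B : E → ℝ^q be linear, a ∈ ℝᵖ, b ∈ ℝ^q, and C := {x ∈ K : A(x) = a, B(x) ≤ b}. Suppose some point of C lies in the interior of K. Then for every x̄ ∈ C, the normal cone of C at x̄ equals Im(A*) + {B*(z) : z ∈ ℝ^q₊, z_j = 0 whenever (B(x̄))_j < b_j} − (K* ∩ {x̄}^⊥). -/
open RealInnerProductSpace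



lemma cone_carath {E : Type*} [AddCommGroup E] [Module ℝ E] {ι : Type*} [DecidableEq ι]
    (v : ι → E) (s : Finset ι) :
    ∀ (c : ι → ℝ), (∀ i ∈ s, 0 ≤ c i) →
    ∃ t, t ⊆ s ∧ LinearIndependent ℝ (fun i : t => v i) ∧
      ∃ d : ι → ℝ, (∀ i ∈ t, 0 ≤ d i) ∧ ∑ i ∈ t, d i • v i = ∑ i ∈ s, c i • v i := by
  induction s using Finset.strongInduction with
  | _ s ih =>
  intro c hc
  by_cases hli : LinearIndependent ℝ (fun i : s => v i)
  · exact ⟨s, Finset.Subset.refl s, hli, c, hc, rfl⟩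
  · obtain ⟨g, hg0, i1, hi1⟩ := Fintype.not_linearIndependent_iff.1 hli
    -- extend g to ι
    set w : ι → ℝ := fun i => if h : i ∈ s then g ⟨i, h⟩ else 0 with hw
    have hwsum : ∑ i ∈ s, w i • v i = 0 := by
      rw [← Finset.sum_coe_sort s (fun i => w i • v i)]
      rw [← hg0]
      refine Finset.sum_congr rfl ?_
      rintro ⟨i, hi⟩ _
      simp [hw, hi]
    have hwex : ∃ u : ι → ℝ, (∑ i ∈ s, u i • v i = 0) ∧ ∃ j ∈ s, 0 < u j := by
      rcases lt_or_gt_of_ne hi1 with h | h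
      · refine ⟨-w, by simp only [Pi.neg_apply, neg_smul, Finset.sum_neg_distrib, hwsum, neg_zero], i1, i1.2, ?_⟩
        have : w i1 = g i1 := by simp [hw, i1.2]
        simp only [Pi.neg_apply]
        rw [this]; linarith
      · refine ⟨w, hwsum, i1, i1.2, ?_⟩
        have : w i1 = g i1 := by simp [hw, i1.2]
        rw [this]; exact h
    obtain ⟨u, husum, j0, hj0s, hj0⟩ := hwex
    set T := s.filter (fun i => 0 < u i) with hT
    have hTne : T.Nonempty := ⟨j0, Finset.mem_filter.2 ⟨hj0s, hj0⟩⟩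
    obtain ⟨i0, hi0T, hi0min⟩ := Finset.exists_min_image T (fun i => c i / u i) hTne
    have hi0s : i0 ∈ s := (Finset.mem_filter.1 hi0T).1
    have hui0 : 0 < u i0 := (Finset.mem_filter.1 hi0T).2
    set τ := c i0 / u i0 with hτ
    have hτ0 : 0 ≤ τ := div_nonneg (hc i0 hi0s) hui0.le
    set c' : ι → ℝ := fun i => c i - τ * u i with hc'
    have hc'nn : ∀ i ∈ s, 0 ≤ c' i := by
      intro i hi
      by_cases hui : 0 < u i
      · have := hi0min i (Finset.mem_filter.2 ⟨hi, hui⟩)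
        have : τ * u i ≤ c i := by
          rw [hτ] at this ⊢
          calc c i0 / u i0 * u i ≤ c i / u i * u i := by
                exact mul_le_mul_of_nonneg_right this hui.le
            _ = c i := div_mul_cancel₀ _ hui.ne'
        simp [hc']; linarith
      · push_neg at hui
        have : τ * u i ≤ 0 := mul_nonpos_of_nonneg_of_nonpos hτ0 hui
        have := hc i hi
        simp [hc']; linarith
    have hc'i0 : c' i0 = 0 := by
      simp [hc', hτ, div_mul_cancel₀ _ hui0.ne']
    have hsum' : ∑ i ∈ s.erase i0, c' i • v i = ∑ i ∈ s, c i • v i := by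
      have h1 : ∑ i ∈ s.erase i0, c' i • v i = ∑ i ∈ s, c' i • v i := by
        rw [← Finset.add_sum_erase s (fun i => c' i • v i) hi0s, hc'i0]
        simp
      rw [h1]
      have : ∑ i ∈ s, c' i • v i = ∑ i ∈ s, c i • v i - τ • ∑ i ∈ s, u i • v i := by
        rw [Finset.smul_sum, ← Finset.sum_sub_distrib]
        refine Finset.sum_congr rfl fun i _ => ?_
        simp [hc', sub_smul, smul_smul]
      rw [this, husum]; simp
    obtain ⟨t, hts, hli', d, hd, hdsum⟩ :=
      ih (s.erase i0) (Finset.erase_ssubset hi0s) c' (fun i hi => hc'nn i (Finset.mem_of_mem_erase hi))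
    exact ⟨t, hts.trans (Finset.erase_subset _ _), hli', d, hd, by rw [hdsum, hsum']⟩


lemma isClosed_indep_cone {F : Type*} [NormedAddCommGroup F] [NormedSpace ℝ F]
    {ι : Type*} [Fintype ι] [DecidableEq ι] (v : ι → F) (t : Finset ι)
    (hli : LinearIndependent ℝ (fun i : t => v i)) :
    IsClosed {x : F | ∃ d : t → ℝ, (∀ i, 0 ≤ d i) ∧ x = ∑ i, d i • v i} := by
  classical
  set L : (t → ℝ) →ₗ[ℝ] F :=
    { toFun := fun d => ∑ i, d i • v (i : ι)
      map_add' := by intro d e; simp [add_smul, Finset.sum_add_distrib]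
      map_smul' := by intro r d; simp [mul_smul, Finset.smul_sum] }
  have hker : LinearMap.ker L = ⊥ := by
    rw [LinearMap.ker_eq_bot']
    intro m hm
    have := Fintype.linearIndependent_iff.1 hli m hm
    funext i; exact this i
  have hemb := LinearMap.isClosedEmbedding_of_injective hker
  have hpos : IsClosed {d : t → ℝ | ∀ i, 0 ≤ d i} := by
    have : {d : t → ℝ | ∀ i, 0 ≤ d i} = ⋂ i, (fun d : t → ℝ => d i) ⁻¹' Set.Ici 0 := by
      ext d; simp [Set.mem_iInter]
    rw [this]
    exact isClosed_iInter fun i => (isClosed_Ici).preimage (continuous_apply i)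
  have : {x : F | ∃ d : t → ℝ, (∀ i, 0 ≤ d i) ∧ x = ∑ i, d i • v i}
      = L '' {d : t → ℝ | ∀ i, 0 ≤ d i} := by
    ext x
    constructor
    · rintro ⟨d, hd, rfl⟩; exact ⟨d, hd, rfl⟩
    · rintro ⟨d, hd, rfl⟩; exact ⟨d, hd, rfl⟩
  rw [this]
  exact hemb.isClosedMap _ hpos

lemma isClosed_fg_cone {F : Type*} [NormedAddCommGroup F] [NormedSpace ℝ F]
    {ι : Type*} [Fintype ι] [DecidableEq ι] (v : ι → F) :
    IsClosed {x : F | ∃ c : ι → ℝ, (∀ i, 0 ≤ c i) ∧ x = ∑ i, c i • v i} := by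
  classical
  have hEq : {x : F | ∃ c : ι → ℝ, (∀ i, 0 ≤ c i) ∧ x = ∑ i, c i • v i}
      = ⋃ (t : Finset ι) (_ : LinearIndependent ℝ (fun i : t => v i)),
          {x : F | ∃ d : t → ℝ, (∀ i, 0 ≤ d i) ∧ x = ∑ i, d i • v i} := by
    ext x
    simp only [Set.mem_iUnion, Set.mem_setOf_eq]
    constructor
    · rintro ⟨c, hc, rfl⟩
      obtain ⟨t, -, hli, d, hd, hsum⟩ :=
        cone_carath v Finset.univ c (fun i _ => hc i)
      refine ⟨t, hli, fun i => d i, fun i => hd i i.2, ?_⟩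
      rw [← hsum, ← Finset.sum_coe_sort t (fun i => d i • v i)]
    · rintro ⟨t, hli, d, hd, rfl⟩
      refine ⟨fun i => if h : i ∈ t then d ⟨i, h⟩ else 0, ?_, ?_⟩
      · intro i; by_cases h : i ∈ t <;> simp [h] <;> exact hd _
      · set f : ι → ℝ := fun i => if h : i ∈ t then d ⟨i, h⟩ else 0 with hf
        have h1 : ∑ i, f i • v i = ∑ i ∈ t, f i • v i :=
          (Finset.sum_subset (Finset.subset_univ t) (fun i _ hi => by simp [hf, hi])).symm
        have h2 : ∑ i ∈ t, f i • v i = ∑ i : t, f i • v (i : ι) :=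
          (Finset.sum_coe_sort t (fun i => f i • v i)).symm
        rw [h1, h2]
        refine Finset.sum_congr rfl ?_
        rintro ⟨i, hi⟩ _
        simp [hf, hi]
  rw [hEq]
  exact isClosed_iUnion_of_finite fun t => isClosed_iUnion_of_finite fun hli =>
    isClosed_indep_cone v t hli

lemma euclid_decomp {n : ℕ} (w : EuclideanSpace ℝ (Fin n)) :
    ∑ i, w i • EuclideanSpace.single i (1:ℝ) = w := by
  have h := (EuclideanSpace.basisFun (Fin n) ℝ).toBasis.sum_repr w
  simpa [OrthonormalBasis.coe_toBasis_repr_apply, EuclideanSpace.basisFun_repr,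
    OrthonormalBasis.coe_toBasis, EuclideanSpace.basisFun_apply] using h

lemma farkas_poly {E : Type*} [NormedAddCommGroup E] [InnerProductSpace ℝ E]
    [FiniteDimensional ℝ E] {p q : ℕ}
    (A : E →ₗ[ℝ] EuclideanSpace ℝ (Fin p)) (B : E →ₗ[ℝ] EuclideanSpace ℝ (Fin q))
    (a : EuclideanSpace ℝ (Fin p)) (b : EuclideanSpace ℝ (Fin q)) (xb : E)
    (hA : A xb = a) (hB : ∀ j, B xb j ≤ b j) (c : E)
    (hc : ∀ x : E, A x = a → (∀ j, B x j ≤ b j) → ⟪c, x⟫ ≤ ⟪c, xb⟫) :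
    ∃ (y : EuclideanSpace ℝ (Fin p)) (z : EuclideanSpace ℝ (Fin q)),
      (∀ j, 0 ≤ z j) ∧ (∀ j, B xb j < b j → z j = 0) ∧
      c = LinearMap.adjoint A y + LinearMap.adjoint B z := by
  classical
  set v : (Fin p ⊕ Fin p) ⊕ Fin q → E := fun i =>
    match i with
    | .inl (.inl i) => LinearMap.adjoint A (EuclideanSpace.single i 1)
    | .inl (.inr i) => - LinearMap.adjoint A (EuclideanSpace.single i 1)
    | .inr j => if B xb j = b j then LinearMap.adjoint B (EuclideanSpace.single j 1) else 0
    with hv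
  set M : Set E := {x | ∃ cc : ((Fin p ⊕ Fin p) ⊕ Fin q) → ℝ,
    (∀ i, 0 ≤ cc i) ∧ x = ∑ i, cc i • v i} with hM
  -- step 1 : c ∈ M
  have hcM : c ∈ M := by
    by_contra hcM
    have Mclosed : IsClosed M := isClosed_fg_cone v
    have Mconv : Convex ℝ M := by
      rintro x ⟨cx, hcx, rfl⟩ y ⟨cy, hcy, rfl⟩ θ τ hθ hτ hθτ
      refine ⟨fun i => θ * cx i + τ * cy i, fun i => add_nonneg (mul_nonneg hθ (hcx i)) (mul_nonneg hτ (hcy i)), ?_⟩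
      simp [Finset.smul_sum, add_smul, mul_smul, Finset.sum_add_distrib]
    obtain ⟨f, u, hfu, huc⟩ := geometric_hahn_banach_closed_point Mconv Mclosed hcM
    have h0M : (0 : E) ∈ M := ⟨0, fun i => le_refl 0, by simp⟩
    have hu0 : 0 < u := by have := hfu 0 h0M; simpa using this
    have hscale : ∀ x ∈ M, ∀ t : ℝ, 0 ≤ t → t • x ∈ M := by
      rintro x ⟨cx, hcx, rfl⟩ t ht
      exact ⟨fun i => t * cx i, fun i => mul_nonneg ht (hcx i),
        by simp [Finset.smul_sum, mul_smul]⟩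
    have hfM : ∀ x ∈ M, f x ≤ 0 := by
      intro x hx
      by_contra hfx
      push_neg at hfx
      have h1 := hfu _ (hscale x hx ((u + 1) / f x) (by positivity))
      rw [map_smul] at h1
      rw [smul_eq_mul, div_mul_cancel₀ _ (ne_of_gt hfx)] at h1
      linarith
    set d : E := (InnerProductSpace.toDual ℝ E).symm f with hd
    have hdip : ∀ x : E, ⟪d, x⟫ = f x := fun x => InnerProductSpace.toDual_symm_apply
    have hgen : ∀ i, v i ∈ M := by
      intro i
      refine ⟨fun j => if j = i then 1 else 0, fun j => by by_cases h : j = i <;> simp [h], ?_⟩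
      have : ∀ j, (if j = i then (1:ℝ) else 0) • v j = if j = i then v j else 0 := by
        intro j; split <;> simp
      simp_rw [this]
      rw [Finset.sum_ite_eq' Finset.univ i v]
      simp
    -- A d = 0
    have hAd : ∀ i, A d i = 0 := by
      intro i
      have h1 := hfM _ (hgen (.inl (.inl i)))
      have h2 := hfM _ (hgen (.inl (.inr i)))
      rw [← hdip] at h1 h2
      simp only [hv] at h1 h2
      rw [real_inner_comm, LinearMap.adjoint_inner_left, EuclideanSpace.inner_single_left] at h1
      rw [inner_neg_right, real_inner_comm, LinearMap.adjoint_inner_left,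
        EuclideanSpace.inner_single_left] at h2
      simp at h1 h2
      linarith
    have hBd : ∀ j, B xb j = b j → B d j ≤ 0 := by
      intro j hj
      have h1 := hfM _ (hgen (.inr j))
      rw [← hdip] at h1
      simp only [hv, if_pos hj] at h1
      rw [real_inner_comm, LinearMap.adjoint_inner_left, EuclideanSpace.inner_single_left] at h1
      simpa using h1
    have hdc : 0 < ⟪d, c⟫ := by rw [hdip]; linarith
    -- perturbation
    have hexp : ∀ (ε : ℝ) j, B (xb + ε • d) j = B xb j + ε * B d j := by
      intro ε j
      rw [map_add, map_smul]
      rfl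
    have hev : ∀ᶠ ε in nhdsWithin (0:ℝ) (Set.Ioi 0), ∀ j, B (xb + ε • d) j ≤ b j := by
      rw [Filter.eventually_all]
      intro j
      by_cases hj : B xb j = b j
      · filter_upwards [self_mem_nhdsWithin] with ε hε
        rw [hexp]
        have h1 := hBd j hj
        have h2 : ε * B d j ≤ 0 := mul_nonpos_of_nonneg_of_nonpos (le_of_lt hε) h1
        rw [hj] at *
        linarith
      · have hlt : B xb j < b j := lt_of_le_of_ne (hB j) hj
        have hcont : Filter.Tendsto (fun ε : ℝ => B xb j + ε * B d j)
            (nhdsWithin (0:ℝ) (Set.Ioi 0)) (nhds (B xb j)) := by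
          have h0 : Filter.Tendsto (fun ε : ℝ => B xb j + ε * B d j) (nhds 0)
              (nhds (B xb j + 0 * B d j)) := by
            exact Filter.Tendsto.add tendsto_const_nhds
              (Filter.Tendsto.mul Filter.tendsto_id tendsto_const_nhds)
          rw [zero_mul, add_zero] at h0
          exact h0.mono_left nhdsWithin_le_nhds
        filter_upwards [hcont.eventually_lt_const hlt] with ε hε
        rw [hexp]; exact le_of_lt hε
    obtain ⟨ε, hεB, hεpos⟩ := (hev.and self_mem_nhdsWithin).exists
    have hεpos : (0:ℝ) < ε := hεpos
    have hAx : A (xb + ε • d) = a := by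
      have : A d = 0 := by
        apply PiLp.ext
        intro i; rw [hAd i]; rfl
      rw [map_add, map_smul, this, smul_zero, add_zero, hA]
    have hle := hc _ hAx hεB
    rw [inner_add_right, real_inner_smul_right] at hle
    have : ⟪c, d⟫ ≤ 0 := by nlinarith
    rw [real_inner_comm] at this
    linarith
  -- step 2: extract y, z
  obtain ⟨cc, hcc, hsum⟩ := hcM
  set y : EuclideanSpace ℝ (Fin p) :=
    ∑ i, (cc (.inl (.inl i)) - cc (.inl (.inr i))) • EuclideanSpace.single i 1 with hy
  set z : EuclideanSpace ℝ (Fin q) := (WithLp.equiv 2 (Fin q → ℝ)).symm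
    (fun j => if B xb j = b j then cc (.inr j) else 0) with hz
  have hzj : ∀ j, z j = if B xb j = b j then cc (.inr j) else 0 := by
    intro j; rw [hz]; rfl
  refine ⟨y, z, ?_, ?_, ?_⟩
  · intro j; rw [hzj]; split
    · exact hcc _
    · exact le_refl 0
  · intro j hj; rw [hzj, if_neg (ne_of_lt hj)]
  · rw [hsum]
    have hAy : LinearMap.adjoint A y =
        ∑ i, (cc (.inl (.inl i)) - cc (.inl (.inr i))) • LinearMap.adjoint A (EuclideanSpace.single i 1) := by
      rw [hy, map_sum]; simp_rw [map_smul]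
    have hBz : LinearMap.adjoint B z =
        ∑ j, z j • LinearMap.adjoint B (EuclideanSpace.single j 1) := by
      conv_lhs => rw [← euclid_decomp z]
      rw [map_sum]; simp_rw [map_smul]
    rw [hAy, hBz, Fintype.sum_sum_type, Fintype.sum_sum_type]
    have hsplit : ∑ i, (cc (.inl (.inl i)) - cc (.inl (.inr i))) • LinearMap.adjoint A (EuclideanSpace.single i 1)
        = ∑ i, cc (.inl (.inl i)) • v (.inl (.inl i)) + ∑ i, cc (.inl (.inr i)) • v (.inl (.inr i)) := by
      rw [← Finset.sum_add_distrib]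
      refine Finset.sum_congr rfl fun i _ => ?_
      simp only [hv, sub_smul, smul_neg]
      ring_nf
      abel
    have hzpart : ∑ j, cc (.inr j) • v (.inr j) = ∑ j, z j • LinearMap.adjoint B (EuclideanSpace.single j 1) := by
      refine Finset.sum_congr rfl fun j _ => ?_
      rw [hzj]
      simp only [hv]
      split
      · rfl
      · simp
    rw [← hzpart, hsplit]


/-- The normal cone of a convex set `C` at a point `x`. -/
def normalCone {E : Type*} [NormedAddCommGroup E] [InnerProductSpace ℝ E]
    (C : Set E) (x : E) : Set E :=
  {c | ∀ y ∈ C, ⟪c, y⟫ ≤ ⟪c, x⟫}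

theorem conic_lp_normal_cone
    {E : Type*} [NormedAddCommGroup E] [InnerProductSpace ℝ E] [FiniteDimensional ℝ E]
    {p q : ℕ} (K : Set E) (hKclosed : IsClosed K) (hKconv : Convex ℝ K)
    (hKcone : ∀ x ∈ K, ∀ t : ℝ, 0 ≤ t → t • x ∈ K)
    (hKpointed : ∀ x ∈ K, -x ∈ K → x = 0)
    (hKint : (interior K).Nonempty)
    (A : E →ₗ[ℝ] EuclideanSpace ℝ (Fin p)) (B : E →ₗ[ℝ] EuclideanSpace ℝ (Fin q))
    (a : EuclideanSpace ℝ (Fin p)) (b : EuclideanSpace ℝ (Fin q))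
    (C : Set E) (hC : C = {x ∈ K | A x = a ∧ ∀ j, B x j ≤ b j})
    (hSlater : ∃ x ∈ C, x ∈ interior K)
    (xb : E) (hxb : xb ∈ C) :
    normalCone C xb =
      {c | ∃ (y : EuclideanSpace ℝ (Fin p)) (z : EuclideanSpace ℝ (Fin q)) (s : E),
        (∀ j, 0 ≤ z j) ∧ (∀ j, B xb j < b j → z j = 0) ∧
        (∀ x ∈ K, 0 ≤ ⟪s, x⟫) ∧ ⟪s, xb⟫ = 0 ∧
        c = LinearMap.adjoint A y + LinearMap.adjoint B z - s} := by
  classical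
  obtain ⟨x0, hx0C, hx0int⟩ := hSlater
  rw [hC] at hxb hx0C
  obtain ⟨hxbK, hxbA, hxbB⟩ := hxb
  obtain ⟨hx0K, hx0A, hx0B⟩ := hx0C
  have h0K : (0 : E) ∈ K := by
    have := hKcone xb hxbK 0 le_rfl
    rwa [zero_smul] at this
  ext c
  simp only [Set.mem_setOf_eq]
  constructor
  · -- hard direction
    intro hcN
    set C1 : Set E := {x : E | A x = a ∧ ∀ j, B x j ≤ b j} with hC1
    have hxbC1 : xb ∈ C1 := ⟨hxbA, hxbB⟩
    have hx0C1 : x0 ∈ C1 := ⟨hx0A, hx0B⟩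
    set W : Set (E × ℝ) :=
      ⋃ x1 ∈ C1, ((fun y => x1 - y) ⁻¹' interior K) ×ˢ (Set.Iio (⟪c, x1⟫ - ⟪c, xb⟫)) with hW
    have hWmem : ∀ w : E × ℝ, w ∈ W ↔
        ∃ x1 ∈ C1, x1 - w.1 ∈ interior K ∧ w.2 < ⟪c, x1⟫ - ⟪c, xb⟫ := by
      intro w
      simp only [hW, Set.mem_iUnion, Set.mem_prod, Set.mem_preimage, Set.mem_Iio,
        exists_prop]
    have hWopen : IsOpen W := by
      refine isOpen_biUnion fun x1 _ => IsOpen.prod ?_ isOpen_Iio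
      exact isOpen_interior.preimage (continuous_const.sub continuous_id)
    have hWconv : Convex ℝ W := by
      intro w hw w' hw' θ τ hθ hτ hθτ
      rw [hWmem] at hw hw' ⊢
      obtain ⟨x1, hx1, hk1, ht1⟩ := hw
      obtain ⟨x1', hx1', hk1', ht1'⟩ := hw'
      refine ⟨θ • x1 + τ • x1', ⟨?_, ?_⟩, ?_, ?_⟩
      · rw [map_add, map_smul, map_smul, hx1.1, hx1'.1, ← add_smul, hθτ, one_smul]
      · intro j
        have h1 := hx1.2 j
        have h2 := hx1'.2 j
        have : B (θ • x1 + τ • x1') j = θ * B x1 j + τ * B x1' j := by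
          rw [map_add, map_smul, map_smul]; rfl
        rw [this]
        have hb : θ * b j + τ * b j = b j := by rw [← add_mul, hθτ, one_mul]
        have k1 := mul_le_mul_of_nonneg_left h1 hθ
        have k2 := mul_le_mul_of_nonneg_left h2 hτ
        linarith
      · have halg : (θ • x1 + τ • x1') - (θ • w + τ • w').1 =
            θ • (x1 - w.1) + τ • (x1' - w'.1) := by
          simp only [Prod.fst_add, Prod.smul_fst]
          rw [smul_sub, smul_sub]; abel
        rw [halg]
        exact hKconv.interior hk1 hk1' hθ hτ hθτ
      · have h2 : (θ • w + τ • w').2 = θ * w.2 + τ * w'.2 := rfl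
        have hrhs : ⟪c, θ • x1 + τ • x1'⟫ - ⟪c, xb⟫ =
            θ * (⟪c, x1⟫ - ⟪c, xb⟫) + τ * (⟪c, x1'⟫ - ⟪c, xb⟫) := by
          rw [inner_add_right, real_inner_smul_right, real_inner_smul_right]
          linear_combination (inner ℝ c xb : ℝ) * hθτ
        rw [h2, hrhs]
        rcases eq_or_lt_of_le hθ with hθ0 | hθpos
        · have hτ1 : τ = 1 := by linarith
          rw [← hθ0, hτ1]; simpa using ht1'
        · exact add_lt_add_of_lt_of_le (by nlinarith) (mul_le_mul_of_nonneg_left ht1'.le hτ)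
    have h00 : ((0 : E), (0 : ℝ)) ∉ W := by
      rw [hWmem]
      rintro ⟨x1, hx1, hk, ht⟩
      rw [sub_zero] at hk
      have hx1C : x1 ∈ C := by rw [hC]; exact ⟨interior_subset hk, hx1.1, hx1.2⟩
      have := hcN x1 hx1C
      simp only at ht
      linarith
    obtain ⟨f, hf⟩ := geometric_hahn_banach_open_point hWconv hWopen h00
    have hf0 : f ((0 : E), (0 : ℝ)) = 0 := by
      have : ((0 : E), (0 : ℝ)) = (0 : E × ℝ) := rfl
      rw [this, map_zero]
    rw [hf0] at hf
    set μ : ℝ := f ((0 : E), (1 : ℝ)) with hμ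
    set d : E := (InnerProductSpace.toDual ℝ E).symm
      (f.comp (ContinuousLinearMap.inl ℝ E ℝ)) with hd
    have hdip : ∀ x : E, ⟪d, x⟫ = f (x, 0) := by
      intro x
      rw [hd, InnerProductSpace.toDual_symm_apply]
      rfl
    have hfdec : ∀ (x : E) (t : ℝ), f (x, t) = ⟪d, x⟫ + t * μ := by
      intro x t
      have h1 : (x, t) = (x, (0:ℝ)) + ((0:E), t) := by simp
      have h2 : ((0:E), t) = t • ((0:E), (1:ℝ)) := by simp
      rw [h1, map_add, h2, map_smul, hdip]
      simp [mul_comm, hμ]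
    have hfW : ∀ x1 ∈ C1, ∀ x2 ∈ interior K, ∀ t : ℝ,
        t < ⟪c, x1⟫ - ⟪c, xb⟫ → ⟪d, x1 - x2⟫ + t * μ < 0 := by
      intro x1 hx1 x2 hx2 t ht
      have hmem : ((x1 - x2, t) : E × ℝ) ∈ W := by
        rw [hWmem]
        exact ⟨x1, hx1, by simpa using hx2, ht⟩
      have := hf _ hmem
      rwa [hfdec] at this
    -- μ > 0
    have hμpos : 0 < μ := by
      set T0 : ℝ := ⟪c, x0⟫ - ⟪c, xb⟫ with hT0
      set t : ℝ := min (T0 - 1) (-1) with htdef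
      have ht1 : t < T0 := lt_of_le_of_lt (min_le_left _ _) (by linarith)
      have ht2 : t < 0 := lt_of_le_of_lt (min_le_right _ _) (by norm_num)
      have := hfW x0 hx0C1 x0 hx0int t ht1
      rw [sub_self, inner_zero_right, zero_add] at this
      by_contra hμ0
      push_neg at hμ0
      nlinarith
    -- key inequality on K
    have hkey : ∀ x1 ∈ C1, ∀ x2 ∈ K,
        ⟪d, x1 - x2⟫ + (⟪c, x1⟫ - ⟪c, xb⟫) * μ ≤ 0 := by
      have hint : ∀ x1 ∈ C1, ∀ x2 ∈ interior K,
          ⟪d, x1 - x2⟫ + (⟪c, x1⟫ - ⟪c, xb⟫) * μ ≤ 0 := by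
        intro x1 hx1 x2 hx2
        set T1 : ℝ := ⟪c, x1⟫ - ⟪c, xb⟫ with hT1
        refine le_of_forall_pos_lt_add fun ε hε => ?_
        have hεμ : 0 < ε / μ := div_pos hε hμpos
        have := hfW x1 hx1 x2 hx2 (T1 - ε / μ) (by rw [hT1]; linarith)
        have hexpand : ⟪d, x1 - x2⟫ + (T1 - ε / μ) * μ
            = ⟪d, x1 - x2⟫ + T1 * μ - ε := by
          field_simp
          ring
        rw [hexpand] at this
        linarith
      intro x1 hx1 x2 hx2
      set φ : ℝ → ℝ := fun θ => ⟪d, x1 - (x2 + θ • (x0 - x2))⟫ + (⟪c, x1⟫ - ⟪c, xb⟫) * μ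
        with hφ
      have hcont : Continuous φ := by
        apply Continuous.add ?_ continuous_const
        exact Continuous.inner continuous_const
          (continuous_const.sub (continuous_const.add ((continuous_id.smul continuous_const))))
      have htend : Filter.Tendsto φ (nhdsWithin (0:ℝ) (Set.Ioi 0)) (nhds (φ 0)) :=
        (hcont.tendsto 0).mono_left nhdsWithin_le_nhds
      have hev : ∀ᶠ θ in nhdsWithin (0:ℝ) (Set.Ioi 0), φ θ ≤ 0 := by
        filter_upwards [Ioc_mem_nhdsGT_of_mem (Set.mem_Ico.2 ⟨le_refl (0:ℝ), zero_lt_one⟩)]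
          with θ hθ
        exact hint x1 hx1 _ (hKconv.add_smul_sub_mem_interior hx2 hx0int hθ)
      have := le_of_tendsto htend hev
      have hφ0 : φ 0 = ⟪d, x1 - x2⟫ + (⟪c, x1⟫ - ⟪c, xb⟫) * μ := by
        rw [hφ]; simp
      rwa [hφ0] at this
    -- properties of d on K
    have hdle : ∀ x2 ∈ K, ⟪d, xb⟫ ≤ ⟪d, x2⟫ := by
      intro x2 hx2
      have := hkey xb hxbC1 x2 hx2
      rw [sub_self, zero_mul, add_zero, inner_sub_right] at this
      linarith
    have hdxb : ⟪d, xb⟫ = 0 := by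
      have h1 := hdle 0 h0K
      rw [inner_zero_right] at h1
      have h2 := hdle ((2:ℝ) • xb) (hKcone xb hxbK 2 (by norm_num))
      rw [real_inner_smul_right] at h2
      linarith
    have hdnn : ∀ x ∈ K, 0 ≤ ⟪d, x⟫ := fun x hx => hdxb ▸ hdle x hx
    -- Farkas for c + μ⁻¹ • d
    have hfar : ∀ x : E, A x = a → (∀ j, B x j ≤ b j) →
        ⟪c + μ⁻¹ • d, x⟫ ≤ ⟪c + μ⁻¹ • d, xb⟫ := by
      intro x hxA hxB
      have hk := hkey x ⟨hxA, hxB⟩ xb hxbK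
      rw [inner_sub_right] at hk
      rw [inner_add_left, inner_add_left, real_inner_smul_left, real_inner_smul_left]
      have hμne : μ ≠ 0 := hμpos.ne'
      have h2 : μ⁻¹ * (⟪d, x⟫ - ⟪d, xb⟫ + (⟪c, x⟫ - ⟪c, xb⟫) * μ) ≤ 0 :=
        mul_nonpos_of_nonneg_of_nonpos (inv_nonneg.2 hμpos.le) (by linarith)
      have h3 : μ⁻¹ * (⟪d, x⟫ - ⟪d, xb⟫ + (⟪c, x⟫ - ⟪c, xb⟫) * μ)
          = μ⁻¹ * ⟪d, x⟫ - μ⁻¹ * ⟪d, xb⟫ + (⟪c, x⟫ - ⟪c, xb⟫) := by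
        field_simp
      rw [h3] at h2
      linarith
    obtain ⟨y, z, hz0, hzc, hcyz⟩ := farkas_poly A B a b xb hxbA hxbB _ hfar
    refine ⟨y, z, μ⁻¹ • d, hz0, hzc, ?_, ?_, ?_⟩
    · intro x hx
      rw [real_inner_smul_left]
      exact mul_nonneg (inv_nonneg.2 hμpos.le) (hdnn x hx)
    · rw [real_inner_smul_left, hdxb, mul_zero]
    · rw [← hcyz]; abel
  · -- easy direction
    rintro ⟨y, z, s, hz0, hzc, hs, hsxb, rfl⟩
    intro x hx
    rw [hC] at hx
    obtain ⟨hxK, hxA, hxB⟩ := hx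
    rw [inner_sub_left, inner_sub_left, inner_add_left, inner_add_left,
      LinearMap.adjoint_inner_left, LinearMap.adjoint_inner_left,
      LinearMap.adjoint_inner_left, LinearMap.adjoint_inner_left, hxA, hxbA]
    have hzB : ⟪z, B x⟫ ≤ ⟪z, B xb⟫ := by
      rw [PiLp.inner_apply, PiLp.inner_apply]
      refine Finset.sum_le_sum fun j _ => ?_
      simp only [RCLike.inner_apply, conj_trivial]
      by_cases hzj : z j = 0
      · rw [hzj]; simp
      · have hzjpos : 0 < z j := lt_of_le_of_ne (hz0 j) (Ne.symm hzj)
        have hact : B xb j = b j := by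
          by_contra hne
          exact hzj (hzc j (lt_of_le_of_ne (hxbB j) hne))
        rw [hact]
        exact mul_le_mul_of_nonneg_right ((hxB j).trans (le_of_eq hact.symm) |>.trans (le_of_eq hact)) hzjpos.le
    have hsx := hs x hxK
    linarith
end

section
/- Let x̄ ∈ {−1,+1}ⁿ. Then x̄x̄ᵀ is a vertex of the elliptope Eₙ = {X ∈ S₊ⁿ : diag(X) = 1}, i.e., the normal cone of Eₙ at x̄x̄ᵀ is full-dimensional in Sym(n). In particular, the matrices (−1)^{[x̄_i x̄_j < 0]} · (e_i e_jᵀ + e_j e_iᵀ)/2 for all i, j ∈ [n] belong to the normal cone of Eₙ at x̄x̄ᵀ. -/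
open Matrix

lemma trace_stdBasisMatrix_mul {n : ℕ} (i j : Fin n) (Y : Matrix (Fin n) (Fin n) ℝ) :
    (Matrix.single i j (1:ℝ) * Y).trace = Y j i := by
  simp [Matrix.trace, Matrix.diag, Matrix.mul_apply, Matrix.single, ite_and,
    Finset.sum_ite_eq]

lemma posSemidef_vecMulVec' {n : ℕ} (x : Fin n → ℝ) : (Matrix.vecMulVec x x).PosSemidef := by
  have h := Matrix.posSemidef_self_mul_conjTranspose (Matrix.replicateCol Unit x)
  rwa [Matrix.conjTranspose_replicateCol, star_trivial, ← Matrix.vecMulVec_eq] at h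

/-- The submodule of symmetric matrices. -/
def symSub (n : ℕ) : Submodule ℝ (Matrix (Fin n) (Fin n) ℝ) where
  carrier := {C | C.IsSymm}
  add_mem' := fun ha hb => ha.add hb
  zero_mem' := Matrix.isSymm_zero
  smul_mem' := fun c _ h => h.smul c

/-- The "symmetrization" linear map into functions on unordered pairs. -/
def Phi (n : ℕ) : Matrix (Fin n) (Fin n) ℝ →ₗ[ℝ] (Sym2 (Fin n) → ℝ) where
  toFun C := fun s => Sym2.lift ⟨fun i j => C i j + C j i, fun i j => by ring⟩ s
  map_add' A B := by
    funext s
    induction s using Sym2.ind with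
    | _ i j => simp only [Sym2.lift_mk, Matrix.add_apply, Pi.add_apply]; ring
  map_smul' c A := by
    funext s
    induction s using Sym2.ind with
    | _ i j => simp only [Sym2.lift_mk, Matrix.smul_apply, Pi.smul_apply, RingHom.id_apply,
        smul_eq_mul]; ring

lemma Phi_mk {n : ℕ} (C : Matrix (Fin n) (Fin n) ℝ) (i j : Fin n) :
    Phi n C s(i, j) = C i j + C j i := rfl

lemma Phi_M {n : ℕ} (a : ℝ) (i j : Fin n) :
    Phi n (a • ((1 / 2 : ℝ) • (Matrix.single i j 1 + Matrix.single j i 1)))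
      = (a * (if i = j then 2 else 1)) • (Pi.single s(i, j) (1:ℝ) : Sym2 (Fin n) → ℝ) := by
  funext s'
  induction s' using Sym2.ind with
  | _ k l =>
    rw [Phi_mk]
    by_cases h : s(k, l) = s(i, j)
    · simp only [Pi.smul_apply, Pi.single_apply, if_pos h, smul_eq_mul, mul_one]
      have base : ∀ p q : Fin n,
          ((a • ((1 / 2 : ℝ) • (Matrix.single p q (1:ℝ) + Matrix.single q p 1)) :
              Matrix (Fin n) (Fin n) ℝ)) p q
          + ((a • ((1 / 2 : ℝ) • (Matrix.single p q (1:ℝ) + Matrix.single q p 1)) :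
              Matrix (Fin n) (Fin n) ℝ)) q p
          = a * (if p = q then 2 else 1) := by
        intro p q
        by_cases hpq : p = q
        · subst hpq
          simp [Matrix.single]
          ring
        · have hpq' : ¬ q = p := fun hh => hpq hh.symm
          simp [Matrix.single, hpq, hpq']
          ring
      rw [Sym2.eq_iff] at h
      rcases h with ⟨rfl, rfl⟩ | ⟨rfl, rfl⟩
      · exact base k l
      · rw [add_comm]; exact base l k
    · have h1 : ¬(i = k ∧ j = l) := fun ⟨p, q⟩ => h (by rw [← p, ← q])
      have h2 : ¬(j = k ∧ i = l) := fun ⟨p, q⟩ => h (by rw [← p, ← q]; exact Sym2.eq_swap)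
      have h3 : ¬(i = l ∧ j = k) := fun ⟨p, q⟩ => h (by rw [← p, ← q]; exact Sym2.eq_swap)
      have h4 : ¬(j = l ∧ i = k) := fun ⟨p, q⟩ => h (by rw [← p, ← q])
      simp only [Matrix.smul_apply, Matrix.add_apply, Matrix.single, Matrix.of_apply,
        if_neg h1, if_neg h2, if_neg h3, if_neg h4, Pi.smul_apply, Pi.single_apply, if_neg h,
        smul_eq_mul]
      ring

lemma Phi_inj_symm {n : ℕ} {C : Matrix (Fin n) (Fin n) ℝ} (h : C.IsSymm)
    (h0 : Phi n C = 0) : C = 0 := by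
  ext k l
  have h1 := congrFun h0 s(k, l)
  rw [Phi_mk, h.apply k l] at h1
  simp only [Pi.zero_apply, Matrix.zero_apply] at h1 ⊢
  linarith

theorem cut_matrix_is_vertex_of_elliptope {n : ℕ} (x : Fin n → ℝ)
    (hx : ∀ i, x i = 1 ∨ x i = -1)
    (Ell : Set (Matrix (Fin n) (Fin n) ℝ))
    (hEll : Ell = {X | X.PosSemidef ∧ ∀ i, X i i = 1}) :
    IsVertex Ell (Matrix.vecMulVec x x) ∧
    ∀ i j : Fin n,
      (if x i * x j < 0 then (-1 : ℝ) else 1) •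
          ((1 / 2 : ℝ) • (Matrix.single i j 1 + Matrix.single j i 1))
        ∈ normalConeM Ell (Matrix.vecMulVec x x) := by
  subst hEll
  have hx2 : ∀ i, x i * x i = 1 := fun i => by rcases hx i with h | h <;> rw [h] <;> norm_num
  have hσ : ∀ i j, (if x i * x j < 0 then (-1:ℝ) else 1) = x i * x j := by
    intro i j
    rcases hx i with h | h <;> rcases hx j with h' | h' <;> rw [h, h'] <;> norm_num
  -- the key membership fact
  have key : ∀ i j : Fin n,
      (x i * x j) •
          ((1 / 2 : ℝ) • (Matrix.single i j 1 + Matrix.single j i 1))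
        ∈ normalConeM {X : Matrix (Fin n) (Fin n) ℝ | X.PosSemidef ∧ ∀ i, X i i = 1}
            (Matrix.vecMulVec x x) := by
    intro i j
    constructor
    · -- symmetric
      have hT : ∀ a b : Fin n, (Matrix.single a b (1:ℝ))ᵀ = Matrix.single b a 1 := by
        intro a b
        ext k l
        simp [Matrix.single, Matrix.transpose_apply, and_comm]
      unfold Matrix.IsSymm
      rw [Matrix.transpose_smul, Matrix.transpose_smul, Matrix.transpose_add, hT, hT, add_comm]
    · intro Y hY
      have hYsymm : Y j i = Y i j := by
        have := hY.1.1.apply i j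
        simpa using this
      have tr : ∀ Z : Matrix (Fin n) (Fin n) ℝ, Z j i = Z i j →
          (((x i * x j) •
            ((1 / 2 : ℝ) • (Matrix.single i j 1 + Matrix.single j i 1))) * Z).trace
          = (x i * x j) * Z i j := by
        intro Z hZ
        rw [smul_mul_assoc, smul_mul_assoc, Matrix.add_mul, Matrix.trace_smul, Matrix.trace_smul,
          Matrix.trace_add, trace_stdBasisMatrix_mul, trace_stdBasisMatrix_mul, hZ]
        simp only [smul_eq_mul]; ring
      rw [tr Y hYsymm,
        tr (Matrix.vecMulVec x x) (by rw [Matrix.vecMulVec_apply, Matrix.vecMulVec_apply]; ring),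
        Matrix.vecMulVec_apply]
      have hrhs : x i * x j * (x i * x j) = 1 := by
        rcases hx i with h | h <;> rcases hx j with h' | h' <;> rw [h, h'] <;> norm_num
      rw [hrhs]
      by_cases hij : i = j
      · subst hij
        rw [hY.2 i, hx2 i, mul_one]
      · have h0 := hY.1.dotProduct_mulVec_nonneg (Pi.single i (x i) - Pi.single j (x j))
        rw [star_trivial, Matrix.mulVec_sub, Matrix.mulVec_single, Matrix.mulVec_single,
          sub_dotProduct, single_dotProduct, single_dotProduct] at h0
        simp only [Pi.sub_apply, Pi.smul_apply, Matrix.col_apply, op_smul_eq_mul] at h0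
        rw [hY.2 i, hY.2 j, hYsymm] at h0
        nlinarith [hx2 i, hx2 j, h0]
  set NC := normalConeM {X : Matrix (Fin n) (Fin n) ℝ | X.PosSemidef ∧ ∀ i, X i i = 1}
      (Matrix.vecMulVec x x) with hNC
  -- span of the normal cone is contained in symmetric matrices
  have hNCsym : Submodule.span ℝ NC ≤ symSub n :=
    Submodule.span_le.2 (fun C hC => hC.1)
  -- the image of the span under Phi is everything
  have hmap : Submodule.map (Phi n) (Submodule.span ℝ NC) = ⊤ := by
    rw [Submodule.map_span]
    apply eq_top_iff.2
    rw [← (Pi.basisFun ℝ (Sym2 (Fin n))).span_eq]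
    apply Submodule.span_le.2
    rintro _ ⟨s, rfl⟩
    rw [Pi.basisFun_apply]
    induction s using Sym2.ind with
    | _ i j =>
      set M : Matrix (Fin n) (Fin n) ℝ :=
        (x i * x j) •
          ((1 / 2 : ℝ) • (Matrix.single i j 1 + Matrix.single j i 1)) with hM
      set c : ℝ := (x i * x j) * (if i = j then 2 else 1) with hc
      have hc0 : c ≠ 0 := by
        rcases hx i with h | h <;> rcases hx j with h' | h' <;>
          simp [hc, h, h'] <;> split_ifs <;> norm_num
      have hPhiM : Phi n M = c • (Pi.single s(i, j) (1:ℝ) : Sym2 (Fin n) → ℝ) :=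
        Phi_M (x i * x j) i j
      have hsingle : (Pi.single s(i, j) (1:ℝ) : Sym2 (Fin n) → ℝ) = c⁻¹ • Phi n M := by
        rw [hPhiM, smul_smul, inv_mul_cancel₀ hc0, one_smul]
      rw [hsingle]
      exact Submodule.smul_mem _ _ (Submodule.subset_span ⟨M, key i j, rfl⟩)
  -- the restriction of Phi to the span is bijective
  set ψ : (Submodule.span ℝ NC) →ₗ[ℝ] (Sym2 (Fin n) → ℝ) :=
    (Phi n).domRestrict (Submodule.span ℝ NC) with hψ
  have hbij : Function.Bijective ψ := by
    constructor
    · intro C D h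
      apply Subtype.ext
      have hsym : (C.1 - D.1).IsSymm := (symSub n).sub_mem (hNCsym C.2) (hNCsym D.2)
      have h0 : Phi n (C.1 - D.1) = 0 := by
        rw [map_sub]
        have : Phi n C.1 = Phi n D.1 := h
        rw [this, sub_self]
      have := Phi_inj_symm hsym h0
      exact sub_eq_zero.1 this
    · intro g
      have hg : g ∈ Submodule.map (Phi n) (Submodule.span ℝ NC) := by rw [hmap]; trivial
      obtain ⟨C, hC, hCg⟩ := hg
      exact ⟨⟨C, hC⟩, hCg⟩
  have hXmem : Matrix.vecMulVec x x ∈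
      {X : Matrix (Fin n) (Fin n) ℝ | X.PosSemidef ∧ ∀ i, X i i = 1} :=
    ⟨posSemidef_vecMulVec' x, fun i => by rw [Matrix.vecMulVec_apply, hx2 i]⟩
  refine ⟨⟨hXmem, ?_⟩, fun i j => by rw [hσ]; exact key i j⟩
  rw [LinearEquiv.finrank_eq (LinearEquiv.ofBijective ψ hbij),
    Module.finrank_fintype_fun_eq_card, Sym2.card, Fintype.card_fin,
    Nat.choose_two_right, Nat.add_sub_cancel, Nat.mul_comm]
end

section
/- Let C ⊆ E be a compact convex set in a finite-dimensional real inner product space, and C° := {y : ⟨y,x⟩ ≤ 1 ∀x ∈ C} its polar. Then the nonempty exposed faces of C° other than C° itself are exactly the nonempty sets of the form F_x̄ := {y ∈ N_C(x̄) : ⟨y, x̄⟩ = 1} as x̄ ranges over C; moreover, for any such face, relint(F_x̄) = {y ∈ relint(N_C(x̄)) : ⟨y, x̄⟩ = 1}. -/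
open RealInnerProductSpace

open Set

section Relint

variable {E : Type*} [NormedAddCommGroup E] [NormedSpace ℝ E] {s : Set E}

lemma relint_prolong {y z : E} (hy : y ∈ intrinsicInterior ℝ s) (hz : z ∈ s) :
    ∃ ε : ℝ, 0 < ε ∧ y + ε • (y - z) ∈ s := by
  obtain ⟨y', hy', hyy⟩ := mem_intrinsicInterior.1 hy
  rw [mem_interior_iff_mem_nhds, Metric.mem_nhds_iff] at hy'
  obtain ⟨δ, hδ, hball⟩ := hy'
  have hys : y ∈ affineSpan ℝ s := hyy ▸ y'.2
  have hzs : z ∈ affineSpan ℝ s := subset_affineSpan ℝ s hz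
  set ε := δ / (2 * (‖y - z‖ + 1)) with hε
  have hεpos : 0 < ε := by positivity
  refine ⟨ε, hεpos, ?_⟩
  have hmem : y + ε • (y - z) ∈ affineSpan ℝ s := by
    have := AffineSubspace.smul_vsub_vadd_mem (affineSpan ℝ s) ε hys hzs hys
    simpa [vsub_eq_sub, vadd_eq_add, add_comm] using this
  have hd : dist (⟨y + ε • (y - z), hmem⟩ : affineSpan ℝ s) y' < δ := by
    rw [Subtype.dist_eq, hyy, dist_eq_norm]
    have h1 : y + ε • (y - z) - y = ε • (y - z) := by abel
    rw [h1, norm_smul, Real.norm_eq_abs, abs_of_pos hεpos, hε]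
    rw [div_mul_eq_mul_div, div_lt_iff₀ (by positivity)]
    nlinarith [norm_nonneg (y - z)]
  exact hball hd

lemma openSegment_subset_relint (hs : Convex ℝ s) {c w : E}
    (hc : c ∈ intrinsicInterior ℝ s) (hw : w ∈ s) :
    openSegment ℝ c w ⊆ intrinsicInterior ℝ s := by
  rintro y ⟨a, b, ha, hb, hab, rfl⟩
  have hab' : a = 1 - b := by linarith
  subst hab'
  have hb1 : b < 1 := by linarith
  obtain ⟨c', hc', hcc⟩ := mem_intrinsicInterior.1 hc
  rw [mem_interior_iff_mem_nhds, Metric.mem_nhds_iff] at hc'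
  obtain ⟨δ, hδ, hball⟩ := hc'
  have hcs : c ∈ affineSpan ℝ s := hcc ▸ c'.2
  have hws : w ∈ affineSpan ℝ s := subset_affineSpan ℝ s hw
  have hyV : (1 - b) • c + b • w ∈ affineSpan ℝ s := by
    have := AffineSubspace.smul_vsub_vadd_mem (affineSpan ℝ s) b hws hcs hcs
    have h2 : b • (w - c) + c = (1 - b) • c + b • w := by module
    simpa [vsub_eq_sub, vadd_eq_add, h2] using this
  refine mem_intrinsicInterior.2 ⟨⟨(1 - b) • c + b • w, hyV⟩, ?_, rfl⟩
  rw [mem_interior_iff_mem_nhds, Metric.mem_nhds_iff]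
  refine ⟨(1 - b) * δ, by positivity, ?_⟩
  intro q hq
  rw [Metric.mem_ball, Subtype.dist_eq] at hq
  have ha0 : (1 - b : ℝ) ≠ 0 := by intro h; rw [sub_eq_zero] at h; exact absurd h.symm hb1.ne
  set c'' := (1 - b)⁻¹ • ((q : E) - w) + w with hc''def
  have hc''V : c'' ∈ affineSpan ℝ s := by
    have := AffineSubspace.smul_vsub_vadd_mem (affineSpan ℝ s) (1 - b)⁻¹ q.2 hws hws
    simpa [vsub_eq_sub, vadd_eq_add, hc''def] using this
  have hkey : c'' - c = (1 - b)⁻¹ • ((q : E) - ((1 - b) • c + b • w)) := by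
    rw [hc''def]
    match_scalars <;> field_simp <;> ring
  have hdist : dist (⟨c'', hc''V⟩ : affineSpan ℝ s) c' < δ := by
    rw [Subtype.dist_eq, hcc, dist_eq_norm, hkey, norm_smul, Real.norm_eq_abs,
      abs_of_pos (inv_pos.2 ha)]
    rw [dist_eq_norm] at hq
    calc (1 - b)⁻¹ * ‖(q : E) - ((1 - b) • c + b • w)‖
        < (1 - b)⁻¹ * ((1 - b) * δ) := by
          exact mul_lt_mul_of_pos_left hq (inv_pos.2 ha)
      _ = δ := by field_simp
  have hc''s : c'' ∈ s := hball hdist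
  have hq' : (q : E) = (1 - b) • c'' + b • w := by
    rw [hc''def]
    match_scalars <;> field_simp <;> ring
  have : (q : E) ∈ s := by
    rw [hq']
    exact hs hc''s hw ha.le hb.le (by ring)
  exact this

lemma mem_relint_iff [FiniteDimensional ℝ E] (hs : Convex ℝ s) {y : E} :
    y ∈ intrinsicInterior ℝ s ↔ y ∈ s ∧ ∀ z ∈ s, ∃ ε : ℝ, 0 < ε ∧ y + ε • (y - z) ∈ s := by
  constructor
  · exact fun h => ⟨intrinsicInterior_subset h, fun z hz => relint_prolong h hz⟩
  · rintro ⟨hy, H⟩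
    obtain ⟨c, hc⟩ := Set.Nonempty.intrinsicInterior hs ⟨y, hy⟩
    obtain ⟨ε, hε, hy'⟩ := H c (intrinsicInterior_subset hc)
    have h1ε : (0:ℝ) < 1 + ε := by linarith
    refine openSegment_subset_relint hs hc hy' ⟨ε / (1 + ε), 1 / (1 + ε), by positivity,
      by positivity, by field_simp; ring, ?_⟩
    match_scalars <;> field_simp <;> ring

end Relint

theorem exposed_faces_of_polar
    {E : Type*} [NormedAddCommGroup E] [InnerProductSpace ℝ E] [FiniteDimensional ℝ E]
    (C : Set E) (hconv : Convex ℝ C) (hcomp : IsCompact C)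
    (Cp : Set E) (hCp : Cp = {y | ∀ x ∈ C, ⟪y, x⟫ ≤ 1}) :
    (∀ Fc : Set E, Fc.Nonempty →
      ((IsExposed ℝ Cp Fc ∧ Fc ≠ Cp) ↔
        ∃ x ∈ C, Fc = {y ∈ normalCone C x | ⟪y, x⟫ = 1})) ∧
    (∀ x ∈ C, ({y ∈ normalCone C x | ⟪y, x⟫ = 1} : Set E).Nonempty →
      intrinsicInterior ℝ {y ∈ normalCone C x | ⟪y, x⟫ = 1}
        = {y ∈ intrinsicInterior ℝ (normalCone C x) | ⟪y, x⟫ = 1}) := by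
  haveI : CompleteSpace E := FiniteDimensional.complete ℝ E
  have h0Cp : (0 : E) ∈ Cp := by rw [hCp]; intro x hx; simp
  constructor
  · intro Fc hFc
    constructor
    · rintro ⟨hexp, hne⟩
      obtain ⟨l, hl⟩ := hexp hFc
      obtain ⟨y₀, hy₀⟩ := hFc
      rw [hl] at hy₀
      obtain ⟨hy₀Cp, hy₀max⟩ := hy₀
      set u := (InnerProductSpace.toDual ℝ E).symm l with hu
      have hlu : ∀ v, l v = ⟪v, u⟫ := fun v => by
        rw [real_inner_comm]; exact (InnerProductSpace.toDual_symm_apply).symm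
      set m := l y₀ with hm
      rcases C.eq_empty_or_nonempty with rfl | hCne
      · exfalso; apply hne
        have hCpuniv : Cp = Set.univ := by rw [hCp]; ext v; simp
        rw [hl, hCpuniv]
        ext v
        simp only [Set.mem_setOf_eq, Set.mem_univ, iff_true, true_and]
        intro z _
        have h1 := hy₀max (y₀ + (y₀ - v)) (by rw [hCpuniv]; trivial)
        have h2 := hy₀max z (by rw [hCpuniv]; trivial)
        simp only [map_add, map_sub] at h1
        linarith
      · -- C nonempty
        have hy₀m : ∀ z ∈ Cp, ⟪z, u⟫ ≤ m := fun z hz => by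
          rw [← hlu]; exact hy₀max z hz
        set D := (fun p : ℝ × E => p.1 • p.2) '' (Set.Icc (0:ℝ) 1 ×ˢ C) with hD
        have hDcomp : IsCompact D :=
          (isCompact_Icc.prod hcomp).image (continuous_fst.smul continuous_snd)
        have hDconv : Convex ℝ D := by
          rintro v₁ ⟨⟨t₁, c₁⟩, ⟨ht₁, hc₁⟩, rfl⟩ v₂ ⟨⟨t₂, c₂⟩, ⟨ht₂, hc₂⟩, rfl⟩ a b ha hb hab
          simp only at *
          rcases eq_or_lt_of_le (add_nonneg (mul_nonneg ha ht₁.1) (mul_nonneg hb ht₂.1)) with hs0 | hs0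
          · have h1 : a * t₁ = 0 := by nlinarith [mul_nonneg ha ht₁.1, mul_nonneg hb ht₂.1]
            have h2 : b * t₂ = 0 := by nlinarith [mul_nonneg ha ht₁.1, mul_nonneg hb ht₂.1]
            have : a • t₁ • c₁ + b • t₂ • c₂ = (0:ℝ) • c₁ := by
              rw [smul_smul, smul_smul, h1, h2]; simp
            exact ⟨(0, c₁), ⟨⟨le_refl 0, zero_le_one⟩, hc₁⟩, this.symm⟩
          · set σ := a * t₁ + b * t₂ with hσ
            have hc : (a * t₁ / σ) • c₁ + (b * t₂ / σ) • c₂ ∈ C := by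
              apply hconv hc₁ hc₂ (div_nonneg (mul_nonneg ha ht₁.1) hs0.le)
                (div_nonneg (mul_nonneg hb ht₂.1) hs0.le)
              field_simp
              exact hσ.symm
            refine ⟨(σ, (a * t₁ / σ) • c₁ + (b * t₂ / σ) • c₂), ⟨⟨hs0.le, ?_⟩, hc⟩, ?_⟩
            · nlinarith [ht₁.1, ht₁.2, ht₂.1, ht₂.2]
            · have hss : σ ≠ 0 := hs0.ne'
              show σ • _ = _
              match_scalars <;> field_simp [hss]
        have hCD : C ⊆ D := fun c hc => ⟨(1, c), ⟨⟨zero_le_one, le_refl 1⟩, hc⟩, one_smul ℝ c⟩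
        have h0D : (0 : E) ∈ D := by
          obtain ⟨c, hc⟩ := hCne
          exact ⟨(0, c), ⟨⟨le_refl 0, zero_le_one⟩, hc⟩, zero_smul ℝ c⟩
        have hbipolar : ∀ v : E, (∀ z ∈ Cp, ⟪z, v⟫ ≤ 1) → v ∈ D := by
          intro v hv
          by_contra hvD
          obtain ⟨f, r, hfa, hrv⟩ := geometric_hahn_banach_closed_point hDconv hDcomp.isClosed hvD
          have hr0 : 0 < r := by have := hfa 0 h0D; simpa using this
          set w := (InnerProductSpace.toDual ℝ E).symm f with hw
          have hfw : ∀ t, f t = ⟪t, w⟫ := fun t => by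
            rw [real_inner_comm]; exact (InnerProductSpace.toDual_symm_apply).symm
          have hwCp : r⁻¹ • w ∈ Cp := by
            rw [hCp]
            intro x' hx'
            have h1 : f x' < r := hfa x' (hCD hx')
            rw [hfw, real_inner_comm] at h1
            rw [real_inner_smul_left]
            nlinarith [mul_pos (inv_pos.2 hr0) (sub_pos.2 h1), inv_mul_cancel₀ hr0.ne']
          have h2 := hv _ hwCp
          rw [real_inner_smul_left] at h2
          have h3 : r < f v := hrv
          rw [hfw, real_inner_comm] at h3
          nlinarith [mul_le_mul_of_nonneg_left h2 hr0.le, mul_inv_cancel₀ hr0.ne']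
        have hm0 : 0 ≤ m := by
          have := hy₀max 0 h0Cp; simpa using this
        rcases eq_or_lt_of_le hm0 with hmz | hmpos
        · -- m = 0 : contradiction with Fc ≠ Cp
          exfalso; apply hne
          have hu0 : u = 0 := by
            by_contra hu0
            obtain ⟨R, hR⟩ := hDcomp.isBounded.subset_closedBall 0
            have hun : 0 < ‖u‖ := norm_pos_iff.2 hu0
            have hR0 : 0 ≤ R := by have := hR h0D; simpa using this
            have hRu : 0 ≤ (R + 1) / ‖u‖ := div_nonneg (by linarith) (norm_nonneg u)
            have hmem : ((R + 1) / ‖u‖) • u ∈ D := by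
              apply hbipolar
              intro z hz
              rw [real_inner_smul_right]
              have h1 : ⟪z, u⟫ ≤ 0 := by rw [hmz]; exact hy₀m z hz
              nlinarith [hRu]
            have := hR hmem
            rw [Metric.mem_closedBall, dist_zero_right, norm_smul, Real.norm_eq_abs] at this
            rw [abs_of_nonneg hRu] at this
            rw [div_mul_cancel₀ _ hun.ne'] at this
            linarith
          rw [hl]
          ext v
          simp only [Set.mem_setOf_eq]
          constructor
          · exact fun h => h.1
          · intro hv
            refine ⟨hv, fun z hz => ?_⟩
            rw [hlu, hlu, hu0]
            simp
        · -- m > 0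
          set v := m⁻¹ • u with hv
          have hvD : v ∈ D := by
            apply hbipolar
            intro z hz
            rw [hv, real_inner_smul_right]
            have h1 := hy₀m z hz
            nlinarith [mul_pos (inv_pos.2 hmpos) hmpos, inv_mul_cancel₀ hmpos.ne',
              mul_le_mul_of_nonneg_left h1 (inv_pos.2 hmpos).le]
          obtain ⟨⟨θ, c⟩, ⟨⟨hθ0, hθ1⟩, hcC⟩, hvc⟩ := hvD
          simp only at hvc
          have hy₀u : ⟪y₀, u⟫ = m := (hlu y₀).symm
          have hy₀v : ⟪y₀, v⟫ = 1 := by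
            rw [hv, real_inner_smul_right, hy₀u, inv_mul_cancel₀ hmpos.ne']
          have hy₀c : ⟪y₀, c⟫ ≤ 1 := by rw [hCp] at hy₀Cp; exact hy₀Cp c hcC
          have hθ : θ = 1 := by
            by_contra hθne
            have hθlt : θ < 1 := lt_of_le_of_ne hθ1 hθne
            rw [← hvc, real_inner_smul_right] at hy₀v
            nlinarith
          have hvC : v ∈ C := by rw [← hvc, hθ, one_smul]; exact hcC
          have huv : u = m • v := by rw [hv, smul_smul, mul_inv_cancel₀ hmpos.ne', one_smul]
          refine ⟨v, hvC, ?_⟩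
          rw [hl]
          ext z
          simp only [Set.mem_setOf_eq, normalCone]
          constructor
          · rintro ⟨hzCp, hzmax⟩
            have hzu : ⟪z, u⟫ = m := le_antisymm (hy₀m z hzCp) (by rw [← hlu]; exact hzmax y₀ hy₀Cp)
            have hzv : ⟪z, v⟫ = 1 := by
              rw [hv, real_inner_smul_right, hzu, inv_mul_cancel₀ hmpos.ne']
            refine ⟨fun y hy => ?_, hzv⟩
            rw [hzv]
            rw [hCp] at hzCp
            exact hzCp y hy
          · rintro ⟨hzN, hzv⟩
            have hzCp : z ∈ Cp := by
              rw [hCp]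
              intro x hx
              calc ⟪z, x⟫ ≤ ⟪z, v⟫ := hzN x hx
                _ = 1 := hzv
            refine ⟨hzCp, fun t htCp => ?_⟩
            rw [hlu, hlu]
            have h2 : ⟪t, u⟫ = m * ⟪t, v⟫ := by rw [huv, real_inner_smul_right]
            have h3 : ⟪z, u⟫ = m * ⟪z, v⟫ := by rw [huv, real_inner_smul_right]
            have h1 : ⟪t, v⟫ ≤ 1 := by rw [hCp] at htCp; exact htCp v hvC
            rw [h2, h3, hzv, mul_one]
            nlinarith
    · rintro ⟨x, hxC, rfl⟩
      obtain ⟨y₀, hy₀N, hy₀x⟩ := hFc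
      have hy₀Cp : y₀ ∈ Cp := by
        rw [hCp]; intro c hc
        calc ⟪y₀, c⟫ ≤ ⟪y₀, x⟫ := hy₀N c hc
          _ = 1 := hy₀x
      constructor
      · intro _
        refine ⟨innerSL ℝ x, ?_⟩
        ext z
        simp only [Set.mem_setOf_eq, normalCone, coe_innerSL_apply, innerSL_apply_apply]
        constructor
        · rintro ⟨hzN, hzx⟩
          have hzCp : z ∈ Cp := by
            rw [hCp]; intro c hc
            calc ⟪z, c⟫ ≤ ⟪z, x⟫ := hzN c hc
              _ = 1 := hzx
          refine ⟨hzCp, fun t htCp => ?_⟩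
          rw [hCp] at htCp
          calc ⟪x, t⟫ = ⟪t, x⟫ := by rw [real_inner_comm]
            _ ≤ 1 := htCp x hxC
            _ = ⟪z, x⟫ := hzx.symm
            _ = ⟪x, z⟫ := by rw [real_inner_comm]
        · rintro ⟨hzCp, hzmax⟩
          have h1 : ⟪z, x⟫ = 1 := by
            apply le_antisymm
            · rw [hCp] at hzCp; exact hzCp x hxC
            · have h := hzmax y₀ hy₀Cp
              calc (1:ℝ) = ⟪y₀, x⟫ := hy₀x.symm
                _ = ⟪x, y₀⟫ := by rw [real_inner_comm]
                _ ≤ ⟪x, z⟫ := h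
                _ = ⟪z, x⟫ := by rw [real_inner_comm]
          refine ⟨fun c hc => ?_, h1⟩
          rw [h1]
          rw [hCp] at hzCp
          exact hzCp c hc
      · intro heq
        have h0 : (0 : E) ∈ {y ∈ normalCone C x | ⟪y, x⟫ = 1} := heq ▸ h0Cp
        simp at h0
  · -- Part 2
    intro x hx hFne
    obtain ⟨y₀, hy₀N, hy₀x⟩ := hFne
    set N := normalCone C x with hN
    have hNconv : Convex ℝ N := by
      intro c₁ h₁ c₂ h₂ a b ha hb hab
      intro y hy
      simp only [inner_add_left, real_inner_smul_left]
      have g₁ := h₁ y hy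
      have g₂ := h₂ y hy
      nlinarith
    have hNcone : ∀ c ∈ N, ∀ μ : ℝ, 0 ≤ μ → μ • c ∈ N := by
      intro c hc μ hμ y hy
      rw [real_inner_smul_left, real_inner_smul_left]
      exact mul_le_mul_of_nonneg_left (hc y hy) hμ
    have hFconv : Convex ℝ ({y ∈ N | ⟪y, x⟫ = 1} : Set E) := by
      intro c₁ h₁ c₂ h₂ a b ha hb hab
      refine ⟨hNconv h₁.1 h₂.1 ha hb hab, ?_⟩
      rw [inner_add_left, real_inner_smul_left, real_inner_smul_left, h₁.2, h₂.2]
      linarith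
    obtain ⟨w, hw⟩ := Set.Nonempty.intrinsicInterior hNconv ⟨y₀, hy₀N⟩
    set t := ⟪w, x⟫ with ht
    set θ : ℝ := (2 * (1 + |t|))⁻¹ with hθ
    have habs : (0:ℝ) < 1 + |t| := by positivity
    have hθ0 : 0 < θ := by positivity
    have hθhalf : θ * (1 + |t|) = 1 / 2 := by rw [hθ]; field_simp
    have hθ1 : θ < 1 := by nlinarith [abs_nonneg t]
    set z₁ := θ • w + (1 - θ) • y₀ with hz₁def
    have hz₁ : z₁ ∈ intrinsicInterior ℝ N :=
      openSegment_subset_relint hNconv hw hy₀N ⟨θ, 1 - θ, hθ0, by linarith, by ring, rfl⟩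
    set r := θ * t + (1 - θ) with hr
    have hrz : ⟪z₁, x⟫ = r := by
      rw [hz₁def, inner_add_left, real_inner_smul_left, real_inner_smul_left, hy₀x, ← ht, hr]
      ring
    have hr0 : 0 < r := by
      have h1 : -|t| ≤ t := neg_abs_le t
      nlinarith
    have hzrel : r⁻¹ • z₁ ∈ intrinsicInterior ℝ N := by
      rw [mem_relint_iff hNconv] at hz₁ ⊢
      obtain ⟨hz₁N, hz₁p⟩ := hz₁
      refine ⟨hNcone _ hz₁N _ (inv_nonneg.2 hr0.le), fun p hp => ?_⟩
      obtain ⟨ε, hε, hmem⟩ := hz₁p (r • p) (hNcone _ hp r hr0.le)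
      refine ⟨ε, hε, ?_⟩
      have h2 := hNcone _ hmem r⁻¹ (inv_nonneg.2 hr0.le)
      have h3 : r⁻¹ • (z₁ + ε • (z₁ - r • p)) = r⁻¹ • z₁ + ε • (r⁻¹ • z₁ - p) := by
        match_scalars <;> field_simp <;> ring
      rwa [h3] at h2
    have hzx : ⟪r⁻¹ • z₁, x⟫ = 1 := by
      rw [real_inner_smul_left, hrz, inv_mul_cancel₀ hr0.ne']
    set z := r⁻¹ • z₁ with hz
    clear_value z z₁ r θ t
    ext y
    simp only [Set.mem_setOf_eq]
    constructor
    · intro hyF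
      obtain ⟨hyF', hyp⟩ := (mem_relint_iff hFconv).1 hyF
      have hzF : z ∈ ({y ∈ N | ⟪y, x⟫ = 1} : Set E) := ⟨intrinsicInterior_subset hzrel, hzx⟩
      obtain ⟨ε, hε, hy'⟩ := hyp z hzF
      have h1ε : (0:ℝ) < 1 + ε := by linarith
      have hyseg : y ∈ openSegment ℝ z (y + ε • (y - z)) := by
        refine ⟨ε / (1 + ε), 1 / (1 + ε), by positivity, by positivity, by field_simp; ring, ?_⟩
        match_scalars <;> field_simp <;> ring
      exact ⟨openSegment_subset_relint hNconv hzrel hy'.1 hyseg, hyF'.2⟩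
    · rintro ⟨hyN, hyx⟩
      rw [mem_relint_iff hFconv]
      obtain ⟨hyN', hyp⟩ := (mem_relint_iff hNconv).1 hyN
      refine ⟨⟨hyN', hyx⟩, fun p hp => ?_⟩
      obtain ⟨ε, hε, hmem⟩ := hyp p hp.1
      refine ⟨ε, hε, hmem, ?_⟩
      rw [inner_add_left, real_inner_smul_left, inner_sub_left, hyx, hp.2]
      ring
end
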